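/- arXiv:1711.10649 — 4 statements merged into one kernel-verified Lean document; each statement's English description precedes it below -/
import Mathlib

section
/- Let φ : ℝ → ℝ be continuously differentiable with bounded derivative, let t > 0 and x ∈ ℝ, and let Z be a standard Gaussian random variable with (classical) expectation E. Define f(w) := (1/√t) e^{(w−x)²/(2t)} ∫_{−∞}^{(w−x)/√t} e^{−y²/2} (φ(x + √t y) − E[φ(x + √t Z)]) dy. Then E[f(x + √t Z)] = −E[φ'(x + √t Z)]; equivalently, E[f(x + √t Z)] = −∂_x V(t,x), where V(t,x) := E[φ(x + √t Z)] is the solution of the heat equation ∂_t V = ½∂²_{xx}V with V(0,·) = φ. -/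
open MeasureTheory Real Filter Set
open scoped NNReal ENNReal Topology

lemma abs_mul_exp (y e : ℝ) : |y * Real.exp e| = |y| * Real.exp e := by
  rw [abs_mul, abs_of_pos (Real.exp_pos _)]

lemma integrable_quad_gauss (b A B D : ℝ) (hb : 0 < b) :
    Integrable (fun y : ℝ => (A + B*|y| + D*y^2) * Real.exp (-b*y^2)) := by
  have h1 : Integrable (fun y : ℝ => Real.exp (-b*y^2)) := integrable_exp_neg_mul_sq hb
  have h2 : Integrable (fun y : ℝ => |y| * Real.exp (-b*y^2)) := by
    have := (integrable_mul_exp_neg_mul_sq hb).abs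
    exact this.congr (Eventually.of_forall fun y => abs_mul_exp y _)
  have h3 : Integrable (fun y : ℝ => y^2 * Real.exp (-b*y^2)) := by
    have := integrable_rpow_mul_exp_neg_mul_sq hb (show (-1:ℝ) < 2 by norm_num)
    refine this.congr (Eventually.of_forall fun y => ?_)
    simp [Real.rpow_natCast]
  have := ((h1.const_mul A).add (h2.const_mul B)).add (h3.const_mul D)
  refine this.congr (Eventually.of_forall fun y => ?_)
  simp only [Pi.add_apply]
  ring

lemma tendsto_quad_gauss (b A B D : ℝ) (hb : 0 < b) :
    Tendsto (fun y : ℝ => (A + B*|y| + D*y^2) * Real.exp (-b*y^2)) atTop (𝓝 0) ∧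
    Tendsto (fun y : ℝ => (A + B*|y| + D*y^2) * Real.exp (-b*y^2)) atBot (𝓝 0) := by
  have key : Tendsto (fun y : ℝ => (A + B*|y| + D*y^2) * Real.exp (-b*y^2)) atTop (𝓝 0) := by
    have hcomp : Tendsto (fun y : ℝ => b * y^2) atTop atTop :=
      (tendsto_pow_atTop two_ne_zero).const_mul_atTop hb
    have l0 : Tendsto (fun u : ℝ => Real.exp (-u)) atTop (𝓝 0) := Real.tendsto_exp_neg_atTop_nhds_zero
    have l1 : Tendsto (fun u : ℝ => u * Real.exp (-u)) atTop (𝓝 0) := by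
      simpa using Real.tendsto_pow_mul_exp_neg_atTop_nhds_zero 1
    have l2 : Tendsto (fun u : ℝ => u^2 * Real.exp (-u)) atTop (𝓝 0) := by
      simpa using Real.tendsto_pow_mul_exp_neg_atTop_nhds_zero 2
    -- each piece
    have t0 : Tendsto (fun y : ℝ => A * Real.exp (-(b*y^2))) atTop (𝓝 0) := by
      simpa using ((l0.comp hcomp).const_mul A)
    have t1 : Tendsto (fun y : ℝ => B*|y| * Real.exp (-(b*y^2))) atTop (𝓝 0) := by
      -- |y| ≤ max 1 (y^2) ≤ 1 + y^2 ≤ (1 + 1/b) * (1 + b y^2) ... squeeze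
      have base : Tendsto (fun y : ℝ => ((abs B)*(1+1/b)) * ((1 + b*y^2) * Real.exp (-(b*y^2)))) atTop (𝓝 0) := by
        have : Tendsto (fun u : ℝ => (1+u) * Real.exp (-u)) atTop (𝓝 0) := by
          have := l0.add l1
          simpa [add_mul] using this
        simpa using ((this.comp hcomp).const_mul ((abs B)*(1+1/b)))
      refine squeeze_zero_norm (fun y => ?_) base
      have hy2 : |y| ≤ 1 + y^2 := by nlinarith [abs_nonneg y, sq_abs y, sq_nonneg (|y|-1)]
      have hb' : (0:ℝ) < 1/b := by positivity
      have h1b : (1:ℝ) + y^2 ≤ (1+1/b) * (1 + b*y^2) := by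
        have h0 : (0:ℝ) ≤ b * y^2 := by positivity
        have h1 : (0:ℝ) ≤ 1/b := le_of_lt hb'
        have hbb : (1/b) * b = 1 := one_div_mul_cancel (ne_of_gt hb)
        nlinarith [hbb, sq_nonneg y, mul_nonneg h1 h0]
      rw [Real.norm_eq_abs, abs_mul_exp]
      have : abs (B*|y|) ≤ (abs B) * (1+1/b) * (1 + b*y^2) := by
        rw [abs_mul, abs_abs]
        calc (abs B) * |y| ≤ (abs B) * ((1+1/b) * (1 + b*y^2)) :=
          mul_le_mul_of_nonneg_left (hy2.trans h1b) (abs_nonneg B)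
        _ = (abs B) * (1+1/b) * (1 + b*y^2) := by ring
      calc abs (B*|y|) * Real.exp (-(b*y^2)) ≤ ((abs B) * (1+1/b) * (1 + b*y^2)) * Real.exp (-(b*y^2)) :=
            mul_le_mul_of_nonneg_right this (Real.exp_pos _).le
        _ = ((abs B)*(1+1/b)) * ((1 + b*y^2) * Real.exp (-(b*y^2))) := by ring
    have t2 : Tendsto (fun y : ℝ => D*y^2 * Real.exp (-(b*y^2))) atTop (𝓝 0) := by
      have : Tendsto (fun y : ℝ => (D/b) * ((b*y^2) * Real.exp (-(b*y^2)))) atTop (𝓝 0) := by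
        simpa using ((l1.comp hcomp).const_mul (D/b))
      refine this.congr (fun y => ?_)
      field_simp
    have := (t0.add t1).add t2
    simp only [add_zero] at this
    refine this.congr' (Eventually.of_forall fun y => ?_)
    simp only [neg_mul]
    ring
  refine ⟨key, ?_⟩
  have : Tendsto (fun y : ℝ => (A + B*|y| + D*y^2) * Real.exp (-b*y^2)) atBot (𝓝 0) := by
    have := key.comp tendsto_neg_atBot_atTop
    refine this.congr (fun y => ?_)
    simp [Function.comp, abs_neg, neg_sq]
  exact this


lemma gauss_integral_eq (u : ℝ → ℝ) :
    ∫ z, u z ∂(ProbabilityTheory.gaussianReal 0 1)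
      = ∫ z, ((Real.sqrt (2*Real.pi))⁻¹ * Real.exp (-z^2/2)) * u z := by
  rw [ProbabilityTheory.gaussianReal_of_var_ne_zero 0 one_ne_zero]
  rw [show ProbabilityTheory.gaussianPDF 0 1 = fun x =>
      ((Real.toNNReal (ProbabilityTheory.gaussianPDFReal 0 1 x) : ℝ≥0) : ℝ≥0∞) from rfl]
  rw [integral_withDensity_eq_integral_smul
      ((ProbabilityTheory.measurable_gaussianPDFReal 0 1).real_toNNReal) u]
  congr 1
  ext z
  rw [NNReal.smul_def, Real.coe_toNNReal _ (ProbabilityTheory.gaussianPDFReal_nonneg 0 1 z)]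
  simp only [ProbabilityTheory.gaussianPDFReal, smul_eq_mul]
  norm_num



lemma gauss_integrable {u : ℝ → ℝ}
    (hvol : Integrable (fun z => ((Real.sqrt (2*Real.pi))⁻¹ * Real.exp (-z^2/2)) * u z)) :
    Integrable u (ProbabilityTheory.gaussianReal 0 1) := by
  rw [ProbabilityTheory.gaussianReal_of_var_ne_zero 0 one_ne_zero]
  rw [show ProbabilityTheory.gaussianPDF 0 1 = fun x =>
      ((Real.toNNReal (ProbabilityTheory.gaussianPDFReal 0 1 x) : ℝ≥0) : ℝ≥0∞) from rfl]
  rw [integrable_withDensity_iff_integrable_coe_smul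
      ((ProbabilityTheory.measurable_gaussianPDFReal 0 1).real_toNNReal)]
  refine hvol.congr (Eventually.of_forall fun z => ?_)
  show _ = (ProbabilityTheory.gaussianPDFReal 0 1 z).toNNReal • u z
  rw [NNReal.smul_def, Real.coe_toNNReal _ (ProbabilityTheory.gaussianPDFReal_nonneg 0 1 z)]
  simp only [ProbabilityTheory.gaussianPDFReal, smul_eq_mul]
  norm_num

lemma tail_bound_Iic {h : ℝ → ℝ} (hint : Integrable h) {A B : ℝ}
    (hle : ∀ y, |h y| ≤ (A + B*|y|) * Real.exp (-(1/2)*y^2)) {z : ℝ} (hz : z ≤ 0) :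
    |∫ y in Iic z, h y| ≤
      (∫ y, (A + B*|y| + 0*y^2) * Real.exp (-(1/4)*y^2)) * Real.exp (-(1/4)*z^2) := by
  have hKint : Integrable (fun y : ℝ => (A + B*|y| + 0*y^2) * Real.exp (-(1/4)*y^2)) :=
    integrable_quad_gauss _ _ _ _ (by norm_num)
  have hABnn : ∀ y : ℝ, 0 ≤ A + B*|y| := fun y => by
    nlinarith [(abs_nonneg (h y)).trans (hle y), Real.exp_pos (-(1/2)*y^2)]
  have step : ∀ y ∈ Iic z, |h y| ≤
      ((A + B*|y| + 0*y^2) * Real.exp (-(1/4)*y^2)) * Real.exp (-(1/4)*z^2) := by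
    intro y hy
    have hy' : y ≤ z := hy
    have hysq : z^2 ≤ y^2 := by nlinarith
    have e1 : Real.exp (-(1/2)*y^2) = Real.exp (-(1/4)*y^2) * Real.exp (-(1/4)*y^2) := by
      rw [← Real.exp_add]; ring_nf
    have e2 : Real.exp (-(1/4)*y^2) ≤ Real.exp (-(1/4)*z^2) := Real.exp_le_exp.2 (by linarith)
    calc |h y| ≤ (A + B*|y|) * Real.exp (-(1/2)*y^2) := hle y
      _ = ((A + B*|y| + 0*y^2) * Real.exp (-(1/4)*y^2)) * Real.exp (-(1/4)*y^2) := by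
          rw [e1]; ring
      _ ≤ ((A + B*|y| + 0*y^2) * Real.exp (-(1/4)*y^2)) * Real.exp (-(1/4)*z^2) := by
          apply mul_le_mul_of_nonneg_left e2
          have := hABnn y
          positivity
  calc |∫ y in Iic z, h y| ≤ ∫ y in Iic z, |h y| := by
        simpa [Real.norm_eq_abs] using
          norm_integral_le_integral_norm (μ := volume.restrict (Iic z)) h
    _ ≤ ∫ y in Iic z, ((A + B*|y| + 0*y^2) * Real.exp (-(1/4)*y^2)) * Real.exp (-(1/4)*z^2) := by
        refine setIntegral_mono_on hint.abs.integrableOn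
          ((hKint.mul_const _).integrableOn) measurableSet_Iic step
    _ = (∫ y in Iic z, (A + B*|y| + 0*y^2) * Real.exp (-(1/4)*y^2)) * Real.exp (-(1/4)*z^2) := by
        rw [integral_mul_const]
    _ ≤ (∫ y, (A + B*|y| + 0*y^2) * Real.exp (-(1/4)*y^2)) * Real.exp (-(1/4)*z^2) := by
        apply mul_le_mul_of_nonneg_right _ (Real.exp_pos _).le
        refine setIntegral_le_integral hKint (Eventually.of_forall fun y => ?_)
        have := hABnn y
        have : 0 ≤ A + B*|y| + 0*y^2 := by simpa using this
        positivity

lemma tail_bound_Ioi {h : ℝ → ℝ} (hint : Integrable h) {A B : ℝ}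
    (hle : ∀ y, |h y| ≤ (A + B*|y|) * Real.exp (-(1/2)*y^2)) {z : ℝ} (hz : 0 ≤ z) :
    |∫ y in Ioi z, h y| ≤
      (∫ y, (A + B*|y| + 0*y^2) * Real.exp (-(1/4)*y^2)) * Real.exp (-(1/4)*z^2) := by
  have hcomp : ∫ y in Ioi z, h y = ∫ y in Iic (-z), h (-y) := by
    rw [← integral_comp_neg_Ioi]
    simp
  rw [hcomp]
  have hint' : Integrable (fun y : ℝ => h (-y)) := by
    have := ((Measure.measurePreserving_neg (volume : Measure ℝ)).integrable_comp
      hint.aestronglyMeasurable).mpr hint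
    exact this
  have hle' : ∀ y, |h (-y)| ≤ (A + B*|y|) * Real.exp (-(1/2)*y^2) := fun y => by
    simpa [abs_neg, neg_sq] using hle (-y)
  have hnn : ∀ y : ℝ, 0 ≤ A + B*|y| + 0*y^2 := fun y => by
    nlinarith [(abs_nonneg (h y)).trans (hle y), Real.exp_pos (-(1/2)*y^2)]
  have := tail_bound_Iic hint' hle' (neg_nonpos.mpr hz)
  simpa [neg_sq] using this


set_option maxHeartbeats 2000000 in
/-- The Gaussian expectation of the Stein-equation solution equals minus the space derivative
of the heat-equation solution: `E[f(x + √t Z)] = −E[φ'(x + √t Z)] = −∂ₓV(t,x)`, where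
`V(t,x) = E[φ(x + √t Z)]`. -/
theorem stmt11 (φ : ℝ → ℝ) (hφ : ContDiff ℝ 1 φ) (C : ℝ) (hbd : ∀ y, |deriv φ y| ≤ C)
    (t x : ℝ) (ht : 0 < t) :
    let c : ℝ := ∫ z, φ (x + Real.sqrt t * z) ∂(ProbabilityTheory.gaussianReal 0 1)
    let f : ℝ → ℝ := fun w =>
      (1 / Real.sqrt t) * Real.exp ((w - x) ^ 2 / (2 * t)) *
        ∫ y in Set.Iic ((w - x) / Real.sqrt t),
          Real.exp (-y ^ 2 / 2) * (φ (x + Real.sqrt t * y) - c)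
    (∫ z, f (x + Real.sqrt t * z) ∂(ProbabilityTheory.gaussianReal 0 1)) =
      -∫ z, deriv φ (x + Real.sqrt t * z) ∂(ProbabilityTheory.gaussianReal 0 1) ∧
    (∫ z, f (x + Real.sqrt t * z) ∂(ProbabilityTheory.gaussianReal 0 1)) =
      -deriv (fun y => ∫ z, φ (y + Real.sqrt t * z) ∂(ProbabilityTheory.gaussianReal 0 1)) x := by
  intro c f
  have hf_def : ∀ w, f w = (1 / Real.sqrt t) * Real.exp ((w - x) ^ 2 / (2 * t)) *
      ∫ y in Set.Iic ((w - x) / Real.sqrt t),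
        Real.exp (-y ^ 2 / 2) * (φ (x + Real.sqrt t * y) - c) := fun w => rfl
  set s := Real.sqrt t with hs_def
  have hs : 0 < s := Real.sqrt_pos.2 ht
  have hs2 : s^2 = t := Real.sq_sqrt ht.le
  have hC : 0 ≤ C := le_trans (abs_nonneg _) (hbd 0)
  have hφd : Differentiable ℝ φ := hφ.differentiable one_ne_zero
  have hφ'c : Continuous (deriv φ) := hφ.continuous_deriv le_rfl
  -- basic definitions
  set h : ℝ → ℝ := fun y => Real.exp (-y^2/2) * (φ (x + s*y) - c) with hh_def
  set g : ℝ → ℝ := fun z => ∫ y in Iic z, h y with hg_def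
  set A : ℝ := |φ x - c| with hA_def
  set B : ℝ := C * s with hB_def
  have hA : 0 ≤ A := abs_nonneg _
  have hB : 0 ≤ B := mul_nonneg hC hs.le
  have hexp_eq : ∀ y : ℝ, -y^2/2 = -(1/2)*y^2 := fun y => by ring
  -- Lipschitz bound for φ
  have hlip : ∀ a b : ℝ, |φ a - φ b| ≤ C * |a - b| := by
    intro a b
    have := Convex.norm_image_sub_le_of_norm_deriv_le (fun w _ => hφd w)
      (fun w _ => by simpa [Real.norm_eq_abs] using hbd w) convex_univ (mem_univ b) (mem_univ a)
    simpa [Real.norm_eq_abs] using this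
  -- pointwise bound on h
  have hhle : ∀ y, |h y| ≤ (A + B*|y|) * Real.exp (-(1/2)*y^2) := by
    intro y
    have h1 : |h y| = Real.exp (-y^2/2) * |φ (x + s*y) - c| := by
      rw [hh_def]; rw [abs_mul, abs_of_pos (Real.exp_pos _)]
    have h2 : |φ (x + s*y) - c| ≤ A + B*|y| := by
      have h3 : |φ (x + s*y) - φ x| ≤ C * (s * |y|) := by
        have := hlip (x + s*y) x
        simpa [abs_mul, abs_of_pos hs] using this
      calc |φ (x + s*y) - c| = |(φ (x + s*y) - φ x) + (φ x - c)| := by ring_nf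
        _ ≤ |φ (x + s*y) - φ x| + |φ x - c| := abs_add_le _ _
        _ ≤ C * (s * |y|) + A := add_le_add h3 le_rfl
        _ = A + B*|y| := by rw [hB_def]; ring
    rw [h1, hexp_eq y]
    calc Real.exp (-(1/2)*y^2) * |φ (x + s*y) - c|
        ≤ Real.exp (-(1/2)*y^2) * (A + B*|y|) :=
          mul_le_mul_of_nonneg_left h2 (Real.exp_pos _).le
      _ = (A + B*|y|) * Real.exp (-(1/2)*y^2) := by ring
  -- continuity of h
  have hhcont : Continuous h := by
    rw [hh_def]
    exact (Real.continuous_exp.comp (by continuity)).mul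
      ((hφ.continuous.comp (by continuity)).sub continuous_const)
  -- integrability of h and y * h y, and exp * deriv term
  have hquad : ∀ b A' B' D' : ℝ, 0 < b → Integrable (fun y : ℝ =>
      (A' + B'*|y| + D'*y^2) * Real.exp (-b*y^2)) := fun b A' B' D' hb =>
    integrable_quad_gauss b A' B' D' hb
  have hint_h : Integrable h := by
    refine (hquad (1/2) A B 0 (by norm_num)).mono' hhcont.aestronglyMeasurable
      (Eventually.of_forall fun y => ?_)
    rw [Real.norm_eq_abs]
    calc |h y| ≤ (A + B*|y|) * Real.exp (-(1/2)*y^2) := hhle y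
      _ = (A + B*|y| + 0*y^2) * Real.exp (-(1/2)*y^2) := by ring
  have hint_yh : Integrable (fun y => y * h y) := by
    refine (hquad (1/2) 0 A B (by norm_num)).mono'
      (continuous_id.mul hhcont).aestronglyMeasurable (Eventually.of_forall fun y => ?_)
    rw [Real.norm_eq_abs, abs_mul]
    calc |y| * |h y| ≤ |y| * ((A + B*|y|) * Real.exp (-(1/2)*y^2)) :=
          mul_le_mul_of_nonneg_left (hhle y) (abs_nonneg y)
      _ = (0 + A*|y| + B*y^2) * Real.exp (-(1/2)*y^2) := by
          rw [← sq_abs y]; ring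
  -- c as a volume integral
  have hsqrt2pi : (0:ℝ) < Real.sqrt (2*Real.pi) := Real.sqrt_pos.2 (by positivity)
  have hc_vol : c = (Real.sqrt (2*Real.pi))⁻¹ * ∫ y, Real.exp (-y^2/2) * φ (x + s*y) := by
    calc c = ∫ z, ((Real.sqrt (2*Real.pi))⁻¹ * Real.exp (-z^2/2)) * φ (x+s*z) :=
          gauss_integral_eq (fun z => φ (x + s*z))
      _ = ∫ z, (Real.sqrt (2*Real.pi))⁻¹ * (Real.exp (-z^2/2) * φ (x+s*z)) := by
          congr 1; funext z; ring
      _ = (Real.sqrt (2*Real.pi))⁻¹ * ∫ z, Real.exp (-z^2/2) * φ (x+s*z) :=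
          integral_const_mul _ _
  have hint_eψ : Integrable (fun y => Real.exp (-y^2/2) * φ (x + s*y)) := by
    refine (hquad (1/2) (|φ x|) B 0 (by norm_num)).mono'
      ((Real.continuous_exp.comp (by continuity)).mul
        (hφ.continuous.comp (by continuity))).aestronglyMeasurable
      (Eventually.of_forall fun y => ?_)
    rw [Real.norm_eq_abs, abs_mul, abs_of_pos (Real.exp_pos _), hexp_eq y]
    have h2 : |φ (x + s*y)| ≤ |φ x| + B*|y| := by
      have h3 : |φ (x + s*y) - φ x| ≤ C * (s * |y|) := by
        have := hlip (x + s*y) x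
        simpa [abs_mul, abs_of_pos hs] using this
      have := abs_sub_abs_le_abs_sub (φ (x + s*y)) (φ x)
      rw [hB_def]; nlinarith
    calc Real.exp (-(1/2)*y^2) * |φ (x + s*y)|
        ≤ Real.exp (-(1/2)*y^2) * (|φ x| + B*|y|) :=
          mul_le_mul_of_nonneg_left h2 (Real.exp_pos _).le
      _ = (|φ x| + B*|y| + 0*y^2) * Real.exp (-(1/2)*y^2) := by ring
  have hint_e : Integrable (fun y : ℝ => Real.exp (-y^2/2)) := by
    refine (integrable_exp_neg_mul_sq (show (0:ℝ) < 1/2 by norm_num)).congr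
      (Eventually.of_forall fun y => ?_)
    show Real.exp (-(1/2)*y^2) = Real.exp (-y^2/2)
    rw [hexp_eq y]
  have hgauss_one : ∫ y : ℝ, Real.exp (-y^2/2) = Real.sqrt (2*Real.pi) := by
    have h0 := integral_gaussian (1/2)
    have h1 : ∫ y : ℝ, Real.exp (-y^2/2) = ∫ y : ℝ, Real.exp (-(1/2)*y^2) := by
      congr 1; funext y; rw [hexp_eq y]
    rw [h1, h0, show Real.pi/(1/2) = 2*Real.pi by ring]
  have htotal : ∫ y, h y = 0 := by
    have hsplit : ∫ y, h y
        = (∫ y, Real.exp (-y^2/2) * φ (x + s*y)) - c * ∫ y, Real.exp (-y^2/2) := by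
      have e : h = fun y => Real.exp (-y^2/2) * φ (x + s*y) - c * Real.exp (-y^2/2) := by
        funext y; rw [hh_def]; ring
      rw [e, integral_sub hint_eψ (hint_e.const_mul c), integral_const_mul]
    rw [hsplit, hgauss_one, hc_vol]
    field_simp
    rw [sub_eq_zero]; congr 1; funext y; ring_nf
  -- derivative of g
  have hgd : ∀ z, HasDerivAt g (h z) z := by
    intro z
    have hrep : g = fun z => g 0 + ∫ u in (0:ℝ)..z, h u := by
      funext w
      have := intervalIntegral.integral_Iic_sub_Iic (a := (0:ℝ)) (b := w)
        hint_h.integrableOn hint_h.integrableOn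
      rw [hg_def]
      simp only at this ⊢
      linarith
    rw [hrep]
    exact ((hhcont.integral_hasStrictDerivAt 0 z).hasDerivAt).const_add (g 0)
  have hgcont : Continuous g := by
    have : Differentiable ℝ g := fun z => (hgd z).differentiableAt
    exact this.continuous
  set K := ∫ y : ℝ, (A + B*|y| + 0*y^2) * Real.exp (-(1/4)*y^2) with hK_def
  have hgbd : ∀ z : ℝ, |g z| ≤ K * Real.exp (-(1/4)*z^2) := by
    intro z
    rcases le_total z 0 with hz | hz
    · exact tail_bound_Iic hint_h hhle hz
    · have hsplit := intervalIntegral.integral_Iic_add_Ioi (b := z) hint_h.integrableOn hint_h.integrableOn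
      have hgz : g z = -∫ y in Ioi z, h y := by
        rw [hg_def]; simp only; rw [htotal] at hsplit; linarith
      rw [hgz, abs_neg]
      exact tail_bound_Ioi hint_h hhle hz
  have hint_g : Integrable g := by
    refine (hquad (1/4) K 0 0 (by norm_num)).mono' hgcont.aestronglyMeasurable
      (Eventually.of_forall fun z => ?_)
    rw [Real.norm_eq_abs]
    calc |g z| ≤ K * Real.exp (-(1/4)*z^2) := hgbd z
      _ = (K + 0*|z| + 0*z^2) * Real.exp (-(1/4)*z^2) := by ring
  -- FTC for z * g z
  have hFd : ∀ z : ℝ, HasDerivAt (fun z => z * g z) (g z + z * h z) z := by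
    intro z
    have := (hasDerivAt_id z).mul (hgd z)
    exact this.congr_deriv (by simp)
  have hFtop : Tendsto (fun z => z * g z) atTop (𝓝 0) := by
    refine squeeze_zero_norm (fun z => ?_) (tendsto_quad_gauss (1/4) 0 K 0 (by norm_num)).1
    rw [Real.norm_eq_abs, abs_mul]
    calc |z| * |g z| ≤ |z| * (K * Real.exp (-(1/4)*z^2)) :=
          mul_le_mul_of_nonneg_left (hgbd z) (abs_nonneg z)
      _ = (0 + K*|z| + 0*z^2) * Real.exp (-(1/4)*z^2) := by ring
  have hFbot : Tendsto (fun z => z * g z) atBot (𝓝 0) := by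
    refine squeeze_zero_norm (fun z => ?_) (tendsto_quad_gauss (1/4) 0 K 0 (by norm_num)).2
    rw [Real.norm_eq_abs, abs_mul]
    calc |z| * |g z| ≤ |z| * (K * Real.exp (-(1/4)*z^2)) :=
          mul_le_mul_of_nonneg_left (hgbd z) (abs_nonneg z)
      _ = (0 + K*|z| + 0*z^2) * Real.exp (-(1/4)*z^2) := by ring
  have key1 : ∫ z, (g z + z * h z) = 0 := by
    have := integral_of_hasDerivAt_of_tendsto hFd (hint_g.add hint_yh) hFbot hFtop
    simpa using this
  have key1' : ∫ z, g z = - ∫ z, z * h z := by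
    rw [integral_add hint_g hint_yh] at key1; linarith
  -- integration by parts (Stein identity)
  have hint_edφ : Integrable (fun y => Real.exp (-y^2/2) * (s * deriv φ (x + s*y))) := by
    refine (hquad (1/2) (s*C) 0 0 (by norm_num)).mono'
      ((Real.continuous_exp.comp (by continuity)).mul
        (continuous_const.mul (hφ'c.comp (by continuity)))).aestronglyMeasurable
      (Eventually.of_forall fun y => ?_)
    rw [Real.norm_eq_abs, abs_mul, abs_mul, abs_of_pos (Real.exp_pos _), abs_of_pos hs,
      hexp_eq y]
    calc Real.exp (-(1/2)*y^2) * (s * |deriv φ (x + s*y)|)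
        ≤ Real.exp (-(1/2)*y^2) * (s * C) := by
          apply mul_le_mul_of_nonneg_left _ (Real.exp_pos _).le
          exact mul_le_mul_of_nonneg_left (hbd _) hs.le
      _ = (s*C + 0*|y| + 0*y^2) * Real.exp (-(1/2)*y^2) := by ring
  have hΦd : ∀ y : ℝ, HasDerivAt (fun y => -h y)
      (y * h y - Real.exp (-y^2/2) * (s * deriv φ (x + s*y))) y := by
    intro y
    have he : HasDerivAt (fun y : ℝ => -y^2/2) (-y) y := by
      have := ((hasDerivAt_pow 2 y).neg).div_const 2
      refine this.congr_deriv ?_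
      norm_num; ring
    have hexp : HasDerivAt (fun y : ℝ => Real.exp (-y^2/2)) (Real.exp (-y^2/2) * (-y)) y :=
      he.exp
    have hinner : HasDerivAt (fun y : ℝ => x + s*y) s y := by
      simpa using ((hasDerivAt_id y).const_mul s).const_add x
    have hψ : HasDerivAt (fun y : ℝ => φ (x + s*y) - c) (deriv φ (x + s*y) * s) y := by
      have := ((hφd (x + s*y)).hasDerivAt).comp y hinner
      simpa using this.sub_const c
    have hm := (hexp.mul hψ).neg
    have : (fun y => -h y) = fun y => -(Real.exp (-y^2/2) * (φ (x + s*y) - c)) := by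
      funext y; rw [hh_def]
    rw [this]
    refine hm.congr_deriv ?_
    rw [hh_def]
    simp only
    ring
  have hΦtop : Tendsto (fun y => -h y) atTop (𝓝 0) := by
    refine squeeze_zero_norm (fun y => ?_) (tendsto_quad_gauss (1/2) A B 0 (by norm_num)).1
    rw [Real.norm_eq_abs, abs_neg]
    calc |h y| ≤ (A + B*|y|) * Real.exp (-(1/2)*y^2) := hhle y
      _ = (A + B*|y| + 0*y^2) * Real.exp (-(1/2)*y^2) := by ring
  have hΦbot : Tendsto (fun y => -h y) atBot (𝓝 0) := by
    refine squeeze_zero_norm (fun y => ?_) (tendsto_quad_gauss (1/2) A B 0 (by norm_num)).2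
    rw [Real.norm_eq_abs, abs_neg]
    calc |h y| ≤ (A + B*|y|) * Real.exp (-(1/2)*y^2) := hhle y
      _ = (A + B*|y| + 0*y^2) * Real.exp (-(1/2)*y^2) := by ring
  have key2 : ∫ y, (y * h y - Real.exp (-y^2/2) * (s * deriv φ (x + s*y))) = 0 := by
    have := integral_of_hasDerivAt_of_tendsto hΦd (hint_yh.sub hint_edφ) hΦbot hΦtop
    simpa using this
  have key2' : ∫ y, y * h y = ∫ y, Real.exp (-y^2/2) * (s * deriv φ (x + s*y)) := by
    rw [integral_sub hint_yh hint_edφ] at key2; linarith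
  have hpull : ∫ y, Real.exp (-y^2/2) * (s * deriv φ (x + s*y))
      = s * ∫ y, Real.exp (-y^2/2) * deriv φ (x + s*y) := by
    rw [← integral_const_mul]; congr 1; funext y; ring
  -- rewrite the integrand of the LHS
  have hfz : (fun z => f (x + s*z)) = fun z => (1/s) * Real.exp (z^2/2) * g z := by
    funext z
    rw [hf_def]
    have e1 : x + s*z - x = s*z := by ring
    have e2 : (s*z)^2/(2*t) = z^2/2 := by
      rw [← hs2]; field_simp
    have e3 : s*z/s = z := by field_simp
    rw [e1, e2, e3]
  -- compute the LHS
  have hLHS : (∫ z, f (x + s*z) ∂(ProbabilityTheory.gaussianReal 0 1))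
      = -((Real.sqrt (2*Real.pi))⁻¹ * ∫ y, Real.exp (-y^2/2) * deriv φ (x+s*y)) := by
    calc (∫ z, f (x + s*z) ∂(ProbabilityTheory.gaussianReal 0 1))
        = ∫ z, ((1/s) * Real.exp (z^2/2) * g z) ∂(ProbabilityTheory.gaussianReal 0 1) := by
          rw [hfz]
      _ = ∫ z, ((Real.sqrt (2*Real.pi))⁻¹ * Real.exp (-z^2/2))
            * ((1/s) * Real.exp (z^2/2) * g z) := gauss_integral_eq _
      _ = ∫ z, ((Real.sqrt (2*Real.pi))⁻¹ * (1/s)) * g z := by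
          congr 1; funext z
          have hee : Real.exp (-z^2/2) * Real.exp (z^2/2) = 1 := by
            rw [← Real.exp_add]
            rw [show -z^2/2 + z^2/2 = 0 by ring, Real.exp_zero]
          calc ((Real.sqrt (2*Real.pi))⁻¹ * Real.exp (-z^2/2))
                * ((1/s) * Real.exp (z^2/2) * g z)
              = ((Real.sqrt (2*Real.pi))⁻¹ * (1/s))
                  * (Real.exp (-z^2/2) * Real.exp (z^2/2)) * g z := by ring
            _ = ((Real.sqrt (2*Real.pi))⁻¹ * (1/s)) * g z := by rw [hee, mul_one]
      _ = ((Real.sqrt (2*Real.pi))⁻¹ * (1/s)) * ∫ z, g z := integral_const_mul _ _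
      _ = -((Real.sqrt (2*Real.pi))⁻¹ * ∫ y, Real.exp (-y^2/2) * deriv φ (x+s*y)) := by
          rw [key1', key2', hpull]
          field_simp
  have hRHS1 : (∫ z, deriv φ (x + s*z) ∂(ProbabilityTheory.gaussianReal 0 1))
      = (Real.sqrt (2*Real.pi))⁻¹ * ∫ y, Real.exp (-y^2/2) * deriv φ (x+s*y) := by
    calc (∫ z, deriv φ (x + s*z) ∂(ProbabilityTheory.gaussianReal 0 1))
        = ∫ z, ((Real.sqrt (2*Real.pi))⁻¹ * Real.exp (-z^2/2)) * deriv φ (x+s*z) :=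
          gauss_integral_eq _
      _ = ∫ z, (Real.sqrt (2*Real.pi))⁻¹ * (Real.exp (-z^2/2) * deriv φ (x+s*z)) := by
          congr 1; funext z; ring
      _ = (Real.sqrt (2*Real.pi))⁻¹ * ∫ y, Real.exp (-y^2/2) * deriv φ (x+s*y) :=
          integral_const_mul _ _
  have conj1 : (∫ z, f (x + s*z) ∂(ProbabilityTheory.gaussianReal 0 1))
      = -∫ z, deriv φ (x + s*z) ∂(ProbabilityTheory.gaussianReal 0 1) := by
    rw [hLHS, hRHS1]
  refine ⟨conj1, ?_⟩
  -- second conjunct: differentiation under the integral sign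
  have hint_μψ : Integrable (fun z => φ (x + s*z)) (ProbabilityTheory.gaussianReal 0 1) := by
    apply gauss_integrable
    have := hint_eψ.const_mul (Real.sqrt (2*Real.pi))⁻¹
    refine this.congr (Eventually.of_forall fun z => ?_)
    ring
  have hderiv2 : HasDerivAt (fun u => ∫ z, φ (u + s*z) ∂(ProbabilityTheory.gaussianReal 0 1))
      (∫ z, deriv φ (x + s*z) ∂(ProbabilityTheory.gaussianReal 0 1)) x := by
    have hres := hasDerivAt_integral_of_dominated_loc_of_deriv_le
      (μ := ProbabilityTheory.gaussianReal 0 1)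
      (F := fun u z => φ (u + s*z)) (F' := fun u z => deriv φ (u + s*z))
      (bound := fun _ => C) (x₀ := x) (s := Metric.ball x 1) (Metric.ball_mem_nhds x one_pos)
      (Eventually.of_forall fun u =>
        (hφ.continuous.comp (by continuity)).aestronglyMeasurable)
      hint_μψ
      ((hφ'c.comp (by continuity)).aestronglyMeasurable)
      (Eventually.of_forall fun z u _ => by
        simpa [Real.norm_eq_abs] using hbd (u + s*z))
      (integrable_const C)
      (Eventually.of_forall fun z u _ => by
        exact ((hφd (u + s*z)).hasDerivAt.comp u ((hasDerivAt_id u).add_const (s*z))).congr_deriv (by simp))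
    exact hres.2
  rw [hderiv2.deriv]
  exact conj1
end

section
/- Let h : ℝ → ℝ be continuously differentiable with bounded derivative and let Z be a standard Gaussian random variable with (classical) expectation E. Define g(s) := e^{s²/2} ∫_{−∞}^s e^{−y²/2} (h(y) − E[h(Z)]) dy for s ∈ ℝ. Then E[g(Z)] = −E[h'(Z)]. -/
open MeasureTheory Real ProbabilityTheory Filter Set
open scoped ENNReal NNReal

lemma gauss_int_eq (f : ℝ → ℝ) :
    ∫ z, f z ∂(gaussianReal 0 1) = ∫ z, gaussianPDFReal 0 1 z * f z := by
  rw [gaussianReal_of_var_ne_zero 0 one_ne_zero]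
  unfold gaussianPDF
  have : (fun x => ENNReal.ofReal (gaussianPDFReal 0 1 x))
      = fun x => ((fun x => (gaussianPDFReal 0 1 x).toNNReal) x : ℝ≥0∞) := by
    ext x; rfl
  rw [this, integral_withDensity_eq_integral_smul
    ((measurable_gaussianPDFReal 0 1).real_toNNReal) f]
  congr 1; ext x
  simp [NNReal.smul_def, Real.coe_toNNReal _ (gaussianPDFReal_nonneg 0 1 x)]

lemma pdf_eq (z : ℝ) : gaussianPDFReal 0 1 z = (Real.sqrt (2 * π))⁻¹ * rexp (-z ^ 2 / 2) := by
  simp [gaussianPDFReal]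

lemma int_phi : Integrable (fun y : ℝ => rexp (-y ^ 2 / 2)) := by
  have := integrable_exp_neg_mul_sq (b := (1:ℝ)/2) (by norm_num)
  convert this using 2 with y
  ring_nf

lemma int_id_phi : Integrable (fun y : ℝ => y * rexp (-y ^ 2 / 2)) := by
  have := integrable_mul_exp_neg_mul_sq (b := (1:ℝ)/2) (by norm_num)
  convert this using 2 with y
  ring_nf

lemma int_abs_phi : Integrable (fun y : ℝ => |y| * rexp (-y ^ 2 / 2)) := by
  simpa [abs_mul, abs_of_pos (Real.exp_pos _)] using int_id_phi.abs

lemma int_sq_phi : Integrable (fun y : ℝ => y ^ 2 * rexp (-y ^ 2 / 2)) := by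
  have := integrable_rpow_mul_exp_neg_mul_sq (b := (1:ℝ)/2) (by norm_num) (s := 2) (by norm_num)
  have e : (fun x : ℝ => x ^ ((2:ℕ):ℝ) * rexp (-(1/2) * x ^ 2))
      = fun y : ℝ => y ^ 2 * rexp (-y ^ 2 / 2) := by
    ext y; rw [Real.rpow_natCast]; ring_nf
  rw [← e]
  convert this using 2
  norm_num

lemma int_phi_eq : ∫ y : ℝ, rexp (-y ^ 2 / 2) = Real.sqrt (2 * π) := by
  have := integral_gaussian ((1:ℝ)/2)
  rw [show π / ((1:ℝ)/2) = 2 * π by ring] at this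
  rw [← this]
  congr 1 with y
  ring_nf

lemma sqrt_two_pi_pos : 0 < Real.sqrt (2 * π) :=
  Real.sqrt_pos.2 (by positivity)

/-- For the bounded solution `g` of the Stein equation
`g'(s) − s g(s) = h(s) − E[h(Z)]`, one has `E[g(Z)] = −E[h'(Z)]`. -/
theorem stmt12 (h : ℝ → ℝ) (hh : ContDiff ℝ 1 h) (C : ℝ) (hbd : ∀ y, |deriv h y| ≤ C) :
    let g : ℝ → ℝ := fun s =>
      Real.exp (s ^ 2 / 2) *
        ∫ y in Set.Iic s, Real.exp (-y ^ 2 / 2) *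
          (h y - ∫ z, h z ∂(ProbabilityTheory.gaussianReal 0 1))
    (∫ z, g z ∂(ProbabilityTheory.gaussianReal 0 1)) =
      -∫ z, deriv h z ∂(ProbabilityTheory.gaussianReal 0 1) := by
  intro g
  set c : ℝ := Real.sqrt (2 * π) with hc
  set m : ℝ := ∫ z, h z ∂(ProbabilityTheory.gaussianReal 0 1) with hm
  set φ : ℝ → ℝ := fun y => rexp (-y ^ 2 / 2) with hφ
  set f : ℝ → ℝ := fun y => φ y * (h y - m) with hfdef
  have hC : 0 ≤ C := le_trans (abs_nonneg _) (hbd 0)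
  have hdiff : Differentiable ℝ h := hh.differentiable one_ne_zero
  have hcont : Continuous h := hh.continuous
  have hcont' : Continuous (deriv h) := hh.continuous_deriv le_rfl
  have hlip : ∀ x y : ℝ, |h y - h x| ≤ C * |y - x| := by
    have hl : LipschitzWith C.toNNReal h := by
      refine lipschitzWith_of_nnnorm_deriv_le hdiff fun x => ?_
      rw [← NNReal.coe_le_coe, coe_nnnorm, Real.norm_eq_abs, Real.coe_toNNReal _ hC]
      exact hbd x
    intro x y
    have := hl.dist_le_mul y x
    rwa [Real.dist_eq, Real.dist_eq, Real.coe_toNNReal _ hC] at this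
  set D : ℝ := |h 0 - m| with hD
  have hDb : ∀ y, |h y - m| ≤ C * |y| + D := by
    intro y
    refine (abs_sub_le (h y) (h 0) m).trans (add_le_add ?_ le_rfl)
    simpa using hlip 0 y
  have hφpos : ∀ y, 0 < φ y := fun y => Real.exp_pos _
  have hφcont : Continuous φ := by fun_prop
  have hf_cont : Continuous f := by fun_prop
  -- integrability of f
  have int_f : Integrable f := by
    refine Integrable.mono' (g := fun y => C * (|y| * φ y) + D * φ y)
      ((int_abs_phi.const_mul C).add (int_phi.const_mul D))
      hf_cont.aestronglyMeasurable (ae_of_all _ fun y => ?_)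
    have h1 := hDb y
    have h2 := (hφpos y).le
    show ‖f y‖ ≤ C * (|y| * φ y) + D * φ y
    rw [Real.norm_eq_abs, hfdef, abs_mul, abs_of_pos (hφpos y)]
    nlinarith [mul_le_mul_of_nonneg_right h1 h2]
  have int_yf : Integrable (fun y => y * f y) := by
    refine Integrable.mono' (g := fun y => C * (y ^ 2 * φ y) + D * (|y| * φ y))
      ((int_sq_phi.const_mul C).add (int_abs_phi.const_mul D))
      ((continuous_id.mul hf_cont).aestronglyMeasurable) (ae_of_all _ fun y => ?_)
    have h1 := hDb y
    have h2 := (hφpos y).le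
    have h3 := abs_nonneg y
    show ‖y * f y‖ ≤ C * (y ^ 2 * φ y) + D * (|y| * φ y)
    rw [Real.norm_eq_abs, hfdef, abs_mul, abs_mul, abs_of_pos (hφpos y)]
    calc |y| * (φ y * |h y - m|) = |h y - m| * (|y| * φ y) := by ring
      _ ≤ (C * |y| + D) * (|y| * φ y) := mul_le_mul_of_nonneg_right h1 (mul_nonneg h3 h2)
      _ = C * (|y| * |y| * φ y) + D * (|y| * φ y) := by ring
      _ = C * (y ^ 2 * φ y) + D * (|y| * φ y) := by rw [abs_mul_abs_self, ← pow_two]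
  have int_phih : Integrable (fun y => φ y * h y) := by
    have := int_f.add (int_phi.const_mul m)
    refine this.congr (ae_of_all _ fun y => ?_)
    simp only [Pi.add_apply, hfdef, hφ]; ring
  have int_phih' : Integrable (fun y => φ y * deriv h y) := by
    refine Integrable.mono' (g := fun y => C * φ y) (int_phi.const_mul C)
      ((hφcont.mul hcont').aestronglyMeasurable) (ae_of_all _ fun y => ?_)
    show ‖φ y * deriv h y‖ ≤ C * φ y
    rw [Real.norm_eq_abs, abs_mul, abs_of_pos (hφpos y), mul_comm C (φ y)]
    exact mul_le_mul_of_nonneg_left (hbd y) (hφpos y).le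
  -- m in terms of Lebesgue integral
  have hmeq : ∫ y, φ y * h y = c * m := by
    have h1 : m = c⁻¹ * ∫ y, φ y * h y := by
      rw [hm, gauss_int_eq h, ← integral_const_mul]
      refine integral_congr_ae (ae_of_all _ fun z => ?_)
      beta_reduce
      rw [pdf_eq]; simp only [hc, hφ]; ring
    rw [h1]
    field_simp
    exact (mul_div_cancel_right₀ _ (show c ≠ 0 from sqrt_two_pi_pos.ne')).symm
  have hfzero : ∫ y, f y = 0 := by
    have : ∫ y, f y = (∫ y, φ y * h y) - ∫ y, m * φ y := by
      rw [← integral_sub int_phih (int_phi.const_mul m)]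
      refine integral_congr_ae (ae_of_all _ fun y => ?_)
      beta_reduce
      simp only [hfdef, hφ]; ring
    rw [this, hmeq, integral_const_mul, int_phi_eq, ← hc]
    ring
  -- integration by parts
  have hparts : ∫ y, y * f y = ∫ y, φ y * deriv h y := by
    have hu : ∀ y : ℝ, HasDerivAt (fun y => -φ y) (y * φ y) y := by
      intro y
      have h1 : HasDerivAt (fun y : ℝ => -y ^ 2 / 2) (-y) y := by
        have h0' := ((hasDerivAt_pow 2 y).div_const 2).neg
        have he : (fun y : ℝ => -(y ^ 2 / 2)) = fun y : ℝ => -y ^ 2 / 2 := by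
          funext t; ring
        replace h0' : HasDerivAt (fun y : ℝ => -(y ^ 2 / 2)) _ y := h0'
        rw [he] at h0'
        convert h0' using 1
        push_cast; ring
      have : HasDerivAt (fun y => -φ y) (-(φ y * -y)) y := (h1.exp).neg
      convert this using 1
      ring
    have hv : ∀ y : ℝ, HasDerivAt (fun y => h y - m) (deriv h y) y :=
      fun y => (hdiff y).hasDerivAt.sub_const m
    have huv' : Integrable ((fun y => -φ y) * deriv h) := by
      have : ((fun y : ℝ => -φ y) * deriv h) = fun y => -(φ y * deriv h y) := by
        ext y; simp [mul_comm]
      rw [this]; exact int_phih'.neg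
    have hu'v : Integrable ((fun y : ℝ => y * φ y) * fun y => h y - m) := by
      have : ((fun y : ℝ => y * φ y) * fun y => h y - m) = fun y => y * f y := by
        ext y; simp only [Pi.mul_apply, hfdef]; ring
      rw [this]; exact int_yf
    have huv : Integrable ((fun y : ℝ => -φ y) * fun y => h y - m) := by
      have : ((fun y : ℝ => -φ y) * fun y => h y - m) = fun y => -f y := by
        ext y; simp only [Pi.mul_apply, hfdef]; ring
      rw [this]; exact int_f.neg
    have := integral_mul_deriv_eq_deriv_mul_of_integrable (fun x _ => hu x) (fun x _ => hv x) huv' hu'v huv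
    have e1 : ∫ y, (fun y => -φ y) y * deriv h y = -∫ y, φ y * deriv h y := by
      rw [← integral_neg]
      refine integral_congr_ae (ae_of_all _ fun y => ?_); beta_reduce; ring
    have e2 : ∫ y, (fun y : ℝ => y * φ y) y * (h y - m) = ∫ y, y * f y := by
      refine integral_congr_ae (ae_of_all _ fun y => ?_); beta_reduce
      simp only [hfdef]; ring
    rw [e1, e2] at this
    linarith
  -- Fubini
  set k : ℝ → ℝ → ℝ := fun z y =>
    if z < 0 then (Iic z).indicator f y else -((Ioi z).indicator f y) with hk
  have hsec : ∀ y : ℝ, ∃ a b cc : ℝ, a ≤ b ∧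
      (fun z => k z y) = (Ico a b).indicator (fun _ => cc) ∧
      b - a = |y| ∧ |cc| = |f y| ∧ cc * (b - a) = -(y * f y) := by
    intro y
    rcases lt_or_ge y 0 with hy | hy
    · refine ⟨y, 0, f y, hy.le, ?_, ?_, rfl, by ring⟩
      · ext z
        rcases lt_or_ge z 0 with hz | hz
        · simp only [hk, if_pos hz, indicator_apply, mem_Iic, mem_Ico]
          by_cases hyz : y ≤ z <;> simp [hyz, hz]
        · simp only [hk, if_neg (not_lt.2 hz), indicator_apply, mem_Ioi, mem_Ico]
          have : ¬ z < y := not_lt.2 (hy.le.trans hz)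
          simp [this, (not_lt.mpr hz : ¬ z < 0)]
      · rw [abs_of_neg hy]; ring
    · refine ⟨0, y, -f y, hy, ?_, ?_, by rw [abs_neg], by ring⟩
      · ext z
        rcases lt_or_ge z 0 with hz | hz
        · simp only [hk, if_pos hz, indicator_apply, mem_Iic, mem_Ico]
          have : ¬ y ≤ z := not_le.2 (hz.trans_le hy)
          simp [this, not_le.2 hz]
        · simp only [hk, if_neg (not_lt.2 hz), indicator_apply, mem_Ioi, mem_Ico, hz, true_and]
          by_cases hzy : z < y <;> simp [hzy]
      · rw [abs_of_nonneg hy]; ring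
  have sect_int : ∀ y : ℝ, Integrable (fun z => k z y) := by
    intro y
    obtain ⟨a, b, cc, hab, hfun, -, -, -⟩ := hsec y
    rw [hfun]
    rw [integrable_indicator_iff measurableSet_Ico]
    exact integrableOn_const measure_Ico_lt_top.ne
  have inner_z : ∀ y : ℝ, ∫ z, k z y = -(y * f y) := by
    intro y
    obtain ⟨a, b, cc, hab, hfun, hba, -, hmul⟩ := hsec y
    rw [hfun, integral_indicator_const _ measurableSet_Ico, Real.volume_real_Ico_of_le hab, smul_eq_mul, mul_comm, hmul]
  have norm_int : ∀ y : ℝ, ∫ z, ‖k z y‖ = |y * f y| := by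
    intro y
    obtain ⟨a, b, cc, hab, hfun, hba, hcc, -⟩ := hsec y
    have : (fun z => ‖k z y‖) = (Ico a b).indicator (fun _ => |cc|) := by
      ext z
      rw [show k z y = (Ico a b).indicator (fun _ => cc) z from congrFun hfun z,
        norm_indicator_eq_indicator_norm]
      rfl
    rw [this, integral_indicator_const _ measurableSet_Ico, Real.volume_real_Ico_of_le hab, smul_eq_mul, hcc, hba]
    exact (abs_mul y (f y)).symm
  have kmeas : AEStronglyMeasurable (Function.uncurry k) (volume.prod volume) := by
    have : Function.uncurry k = fun p : ℝ × ℝ =>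
        ({p : ℝ × ℝ | p.1 < 0 ∧ p.2 ≤ p.1}).indicator (fun p => f p.2) p
        - ({p : ℝ × ℝ | ¬ p.1 < 0 ∧ p.1 < p.2}).indicator (fun p => f p.2) p := by
      ext ⟨z, y⟩
      simp only [Function.uncurry, hk, indicator_apply, mem_setOf_eq]
      by_cases hz : z < 0
      · by_cases hyz : y ≤ z <;> simp [hz, hyz, indicator_apply]
      · by_cases hzy : z < y <;> simp [hz, hzy, indicator_apply]
    rw [this]
    have hA : MeasurableSet {p : ℝ × ℝ | p.1 < 0 ∧ p.2 ≤ p.1} :=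
      ((measurableSet_lt measurable_fst measurable_const).inter
        (measurableSet_le measurable_snd measurable_fst))
    have hB : MeasurableSet {p : ℝ × ℝ | ¬ p.1 < 0 ∧ p.1 < p.2} :=
      ((measurableSet_lt measurable_fst measurable_const).compl.inter
        (measurableSet_lt measurable_fst measurable_snd))
    have hmf : Measurable fun p : ℝ × ℝ => f p.2 :=
      hf_cont.measurable.comp measurable_snd
    exact ((hmf.indicator hA).sub (hmf.indicator hB)).aestronglyMeasurable
  have k_prod_int : Integrable (Function.uncurry k) (volume.prod volume) := by
    rw [integrable_prod_iff' kmeas]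
    constructor
    · exact ae_of_all _ sect_int
    · refine (int_yf.abs).congr (ae_of_all _ fun y => ?_)
      simp only [Function.uncurry_apply_pair]
      exact (norm_int y).symm
  have inner_y : ∀ z : ℝ, ∫ y, k z y = ∫ y in Iic z, f y := by
    intro z
    by_cases hz : z < 0
    · simp only [hk, if_pos hz]
      exact integral_indicator measurableSet_Iic
    · simp only [hk, if_neg hz]
      rw [integral_neg, integral_indicator measurableSet_Ioi]
      have := intervalIntegral.integral_Iic_add_Ioi (int_f.integrableOn) (int_f.integrableOn) (b := z)
      rw [hfzero] at this
      linarith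
  have hswap := integral_integral_swap k_prod_int
  have hF : ∫ z, (∫ y in Iic z, f y) = -∫ y, φ y * deriv h y := by
    have e1 : ∫ z, (∫ y in Iic z, f y) = ∫ z, ∫ y, k z y := by
      refine integral_congr_ae (ae_of_all _ fun z => ?_); exact (inner_y z).symm
    have e2 : ∫ y, ∫ z, k z y = ∫ y, -(y * f y) := by
      refine integral_congr_ae (ae_of_all _ fun y => ?_); exact inner_z y
    rw [e1, hswap, e2, integral_neg, hparts]
  -- assemble
  have lhs : ∫ z, g z ∂(ProbabilityTheory.gaussianReal 0 1)
      = c⁻¹ * ∫ z, (∫ y in Iic z, f y) := by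
    rw [gauss_int_eq g, ← integral_const_mul]
    refine integral_congr_ae (ae_of_all _ fun z => ?_)
    beta_reduce
    have hgz : g z = rexp (z ^ 2 / 2) * ∫ y in Iic z, f y := rfl
    rw [hgz, pdf_eq]
    simp only [hc]
    rw [show (√(2 * π))⁻¹ * rexp (-z ^ 2 / 2) * (rexp (z ^ 2 / 2) * ∫ y in Iic z, f y)
        = (√(2 * π))⁻¹ * (rexp (-z ^ 2 / 2) * rexp (z ^ 2 / 2)) * ∫ y in Iic z, f y by ring,
      ← Real.exp_add]
    have he0 : -z ^ 2 / 2 + z ^ 2 / 2 = 0 := by ring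
    rw [he0, Real.exp_zero, mul_one]
  have rhs : ∫ z, deriv h z ∂(ProbabilityTheory.gaussianReal 0 1)
      = c⁻¹ * ∫ y, φ y * deriv h y := by
    rw [gauss_int_eq (deriv h), ← integral_const_mul]
    refine integral_congr_ae (ae_of_all _ fun z => ?_)
    show gaussianPDFReal 0 1 z * deriv h z = c⁻¹ * (φ z * deriv h z)
    rw [pdf_eq]; simp only [hc, hφ]; ring
  rw [lhs, rhs, hF]
  ring
end

section
/- Let X_1, …, X_n be i.i.d. real random variables on a (classical) probability space with E[X_1] = 0, E[X_1²] = 1 and E[|X_1|³] < ∞, and let 0 < σ_ ≤ σ̄. For a sequence σ = (σ_1, …, σ_n) of Borel measurable functions σ_i : ℝ → [σ_, σ̄], define W^σ_0 := 0 and W^σ_i := W^σ_{i−1} + σ_i(W^σ_{i−1}) X_i/√n for 1 ≤ i ≤ n. Then for every Lipschitz φ : ℝ → ℝ and every 0 ≤ i < n, sup_σ E[φ(W^σ_{i+1})] = sup_σ E[Ψ(W^σ_i)], where Ψ(s) := sup_{λ ∈ [σ_, σ̄]} E[φ(s + λ X_1/√n)] and both suprema are over all such sequences σ of measurable functions. 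-/
open MeasureTheory

noncomputable def WS {Ω : Type*} (X : ℕ → Ω → ℝ) (n : ℕ) (σ : ℕ → ℝ → ℝ) : ℕ → Ω → ℝ
  | 0 => fun _ => 0
  | (i + 1) => fun ω =>
      WS X n σ i ω + σ i (WS X n σ i ω) * X i ω / Real.sqrt n

lemma WS_meas {Ω : Type*} [MeasurableSpace Ω] (X : ℕ → Ω → ℝ) (hX : ∀ i, Measurable (X i))
    (n : ℕ) (σ : ℕ → ℝ → ℝ) (hσ : ∀ j, Measurable (σ j)) : ∀ i, Measurable (WS X n σ i)
  | 0 => measurable_const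
  | (i + 1) => by
    have h := WS_meas X hX n σ hσ i
    exact (h.add ((((hσ i).comp h).mul (hX i)).div_const _))

lemma WS_congr {Ω : Type*} (X : ℕ → Ω → ℝ) (n : ℕ) {σ σ' : ℕ → ℝ → ℝ} :
    ∀ i, (∀ j < i, σ j = σ' j) → WS X n σ i = WS X n σ' i
  | 0, _ => rfl
  | (i + 1), h => by
    have hi := WS_congr X n i (fun j hj => h j (Nat.lt_succ_of_lt hj))
    funext ω
    simp only [WS, hi, h i (Nat.lt_succ_self i)]

lemma WS_comp {Ω : Type*} [MeasurableSpace Ω] (X : ℕ → Ω → ℝ) (n : ℕ) (σ : ℕ → ℝ → ℝ)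
    (hσ : ∀ j, Measurable (σ j)) :
    ∀ i, ∃ F : (Fin i → ℝ) → ℝ, Measurable F ∧ ∀ ω, WS X n σ i ω = F (fun j => X j ω)
  | 0 => ⟨fun _ => 0, measurable_const, fun _ => rfl⟩
  | (i + 1) => by
    obtain ⟨F, hF, hFe⟩ := WS_comp X n σ hσ i
    refine ⟨fun v => F (fun j => v j.castSucc) +
      σ i (F (fun j => v j.castSucc)) * v (Fin.last i) / Real.sqrt n, ?_, fun ω => ?_⟩
    · have h1 : Measurable fun v : Fin (i+1) → ℝ => F (fun j => v j.castSucc) :=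
        hF.comp (measurable_pi_lambda _ (fun j => measurable_pi_apply _))
      exact h1.add ((((hσ i).comp h1).mul (measurable_pi_apply _)).div_const _)
    · simp only [WS, hFe]
      norm_num [Fin.castSucc, Fin.castAdd, Fin.castLE, Fin.last]

lemma WS_abs_le {Ω : Type*} (X : ℕ → Ω → ℝ) (n : ℕ) (hn : 1 ≤ n) (σ : ℕ → ℝ → ℝ) {C : ℝ}
    (hσ2 : ∀ j s, |σ j s| ≤ C) :
    ∀ i, ∀ ω, |WS X n σ i ω| ≤ (C / Real.sqrt n) * ∑ j ∈ Finset.range i, |X j ω|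
  | 0, ω => by simp [WS]
  | (i + 1), ω => by
    have hi := WS_abs_le X n hn σ hσ2 i ω
    have hC : 0 ≤ C := le_trans (abs_nonneg _) (hσ2 0 0)
    have hs : (0:ℝ) < Real.sqrt n := Real.sqrt_pos.2 (by exact_mod_cast hn)
    calc |WS X n σ (i+1) ω| ≤ |WS X n σ i ω| + |σ i (WS X n σ i ω) * X i ω / Real.sqrt n| :=
          abs_add_le _ _
      _ ≤ (C / Real.sqrt n) * ∑ j ∈ Finset.range i, |X j ω| + (C / Real.sqrt n) * |X i ω| := by
          gcongr
          rw [abs_div, abs_mul, abs_of_nonneg hs.le, div_mul_eq_mul_div,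
            div_le_div_iff_of_pos_right hs]
          exact mul_le_mul_of_nonneg_right (hσ2 _ _) (abs_nonneg _)
      _ = (C / Real.sqrt n) * ∑ j ∈ Finset.range (i+1), |X j ω| := by
          rw [Finset.sum_range_succ, mul_add]

section Gsec
variable {Ω : Type*} [MeasurableSpace Ω] (P : Measure Ω) [IsProbabilityMeasure P]
  (Y : Ω → ℝ) (φ : ℝ → ℝ) (c : ℝ)

noncomputable def Gf : ℝ → ℝ → ℝ := fun s lam => ∫ ω, φ (s + lam * Y ω / c) ∂P

variable {P Y φ c}
variable (hY : Measurable Y) (hYint : Integrable Y P) {L : NNReal} (hφ : LipschitzWith L φ)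
  (hc : 0 < c)

lemma habs {Ω : Type*} [MeasurableSpace Ω] (P : Measure Ω) (g : Ω → ℝ) :
    |∫ ω, g ω ∂P| ≤ ∫ ω, |g ω| ∂P := by
  simpa [Real.norm_eq_abs] using norm_integral_le_integral_norm (μ := P) g

include hφ in
lemma phi_abs_le (x : ℝ) : |φ x| ≤ |φ 0| + L * |x| := by
  have := hφ.dist_le_mul x 0
  rw [Real.dist_eq, Real.dist_eq, sub_zero] at this
  calc |φ x| ≤ |φ x - φ 0| + |φ 0| := by
        have := abs_sub_abs_le_abs_sub (φ x) (φ 0); linarith [abs_abs (φ x)]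
    _ ≤ |φ 0| + L * |x| := by linarith

include hY hYint hφ hc in
lemma Gf_int (s lam : ℝ) : Integrable (fun ω => φ (s + lam * Y ω / c)) P := by
  have hb : Integrable (fun ω => |φ 0| + L * (|s| + |lam| * |Y ω| / c)) P := by
    apply Integrable.add (integrable_const _)
    apply Integrable.const_mul
    apply Integrable.add (integrable_const _)
    exact ((hYint.abs.const_mul _).div_const _)
  refine Integrable.mono' hb ?_ ?_
  · exact (hφ.continuous.measurable.comp
      ((measurable_const.add ((measurable_const.mul hY).div_const _)))).aestronglyMeasurable
  · filter_upwards with ω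
    rw [Real.norm_eq_abs]
    refine le_trans (phi_abs_le hφ _) ?_
    gcongr
    calc |s + lam * Y ω / c| ≤ |s| + |lam * Y ω / c| := abs_add_le _ _
      _ ≤ |s| + |lam| * |Y ω| / c := by rw [abs_div, abs_mul, abs_of_nonneg hc.le]

include hY hYint hφ hc in
lemma Gf_lip_s (lam s s' : ℝ) : |Gf P Y φ c s lam - Gf P Y φ c s' lam| ≤ L * |s - s'| := by
  simp only [Gf]
  rw [← integral_sub (Gf_int hY hYint hφ hc s lam) (Gf_int hY hYint hφ hc s' lam)]
  refine le_trans (habs P _) ?_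
  have : ∀ ω, |φ (s + lam * Y ω / c) - φ (s' + lam * Y ω / c)| ≤ (L : ℝ) * |s - s'| := by
    intro ω
    have := hφ.dist_le_mul (s + lam * Y ω / c) (s' + lam * Y ω / c)
    rw [Real.dist_eq, Real.dist_eq] at this
    simpa using this
  calc ∫ ω, |φ (s + lam * Y ω / c) - φ (s' + lam * Y ω / c)| ∂P
      ≤ ∫ _, (L : ℝ) * |s - s'| ∂P := by
        refine integral_mono ?_ (integrable_const _) this
        exact ((Gf_int hY hYint hφ hc s lam).sub (Gf_int hY hYint hφ hc s' lam)).abs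
    _ = L * |s - s'| := by simp

include hY hYint hφ hc in
lemma Gf_lip_lam (s lam lam' : ℝ) :
    |Gf P Y φ c s lam - Gf P Y φ c s lam'| ≤ (L * (∫ ω, |Y ω| ∂P) / c) * |lam - lam'| := by
  simp only [Gf]
  rw [← integral_sub (Gf_int hY hYint hφ hc s lam) (Gf_int hY hYint hφ hc s lam')]
  refine le_trans (habs P _) ?_
  have hpt : ∀ ω, |φ (s + lam * Y ω / c) - φ (s + lam' * Y ω / c)| ≤
      (L : ℝ) * |lam - lam'| * |Y ω| / c := by
    intro ω
    have := hφ.dist_le_mul (s + lam * Y ω / c) (s + lam' * Y ω / c)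
    rw [Real.dist_eq, Real.dist_eq] at this
    refine le_trans this (le_of_eq ?_)
    rw [add_sub_add_left_eq_sub, div_sub_div_same, ← sub_mul, abs_div, abs_mul,
      abs_of_nonneg hc.le]
    ring
  calc ∫ ω, |φ (s + lam * Y ω / c) - φ (s + lam' * Y ω / c)| ∂P
      ≤ ∫ ω, (L : ℝ) * |lam - lam'| * |Y ω| / c ∂P := by
        refine integral_mono ?_ ?_ hpt
        · exact ((Gf_int hY hYint hφ hc s lam).sub (Gf_int hY hYint hφ hc s lam')).abs
        · exact (hYint.abs.const_mul _).div_const _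
    _ = (L * (∫ ω, |Y ω| ∂P) / c) * |lam - lam'| := by
        rw [integral_div, MeasureTheory.integral_const_mul]; ring

include hY hYint hφ hc in
lemma Gf_cont : Continuous (fun p : ℝ × ℝ => Gf P Y φ c p.1 p.2) := by
  set K2 : ℝ := L * (∫ ω, |Y ω| ∂P) / c with hK2
  have hK2n : 0 ≤ K2 :=
    div_nonneg (mul_nonneg L.2 (integral_nonneg fun ω => abs_nonneg _)) hc.le
  refine LipschitzWith.continuous (K := L + Real.toNNReal K2) ?_
  refine LipschitzWith.of_dist_le_mul ?_
  rintro ⟨s, lam⟩ ⟨s', lam'⟩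
  have h1 : |lam - lam'| ≤ dist (s, lam) (s', lam') := by
    rw [Prod.dist_eq, ← Real.dist_eq]; exact le_max_right _ _
  have h2 : |s - s'| ≤ dist (s, lam) (s', lam') := by
    rw [Prod.dist_eq, ← Real.dist_eq]; exact le_max_left _ _
  have hd : (0:ℝ) ≤ dist (s, lam) (s', lam') := dist_nonneg
  calc dist (Gf P Y φ c s lam) (Gf P Y φ c s' lam')
      ≤ |Gf P Y φ c s lam - Gf P Y φ c s lam'| + |Gf P Y φ c s lam' - Gf P Y φ c s' lam'| := by
        rw [Real.dist_eq]; exact abs_sub_le _ _ _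
    _ ≤ K2 * |lam - lam'| + L * |s - s'| :=
        add_le_add (Gf_lip_lam hY hYint hφ hc _ _ _) (Gf_lip_s hY hYint hφ hc _ _ _)
    _ ≤ K2 * dist (s, lam) (s', lam') + L * dist (s, lam) (s', lam') := by
        gcongr
    _ ≤ (L + Real.toNNReal K2 : NNReal) * dist (s, lam) (s', lam') := by
        rw [NNReal.coe_add, Real.coe_toNNReal _ hK2n]
        nlinarith
end Gsec

noncomputable def Psif {Ω : Type*} [MeasurableSpace Ω] (P : Measure Ω) (Y : Ω → ℝ)
    (φ : ℝ → ℝ) (c a b : ℝ) : ℝ → ℝ := fun s => sSup (Gf P Y φ c s '' Set.Icc a b)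

section Psec
variable {Ω : Type*} [MeasurableSpace Ω] {P : Measure Ω} [IsProbabilityMeasure P]
  {Y : Ω → ℝ} {φ : ℝ → ℝ} {c : ℝ}
  (hY : Measurable Y) (hYint : Integrable Y P) {L : NNReal} (hφ : LipschitzWith L φ)
  (hc : 0 < c) {a b : ℝ} (hab : a ≤ b)

include hY hYint hφ hc in
lemma Gf_bound (s lam : ℝ) :
    |Gf P Y φ c s lam| ≤ |φ 0| + L * |s| + (L * |lam| / c) * ∫ ω, |Y ω| ∂P := by
  refine le_trans (habs P _) ?_
  have hpt : ∀ ω, |φ (s + lam * Y ω / c)| ≤ |φ 0| + L * |s| + (L * |lam| / c) * |Y ω| := by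
    intro ω
    refine le_trans (phi_abs_le hφ _) ?_
    have : |s + lam * Y ω / c| ≤ |s| + |lam| * |Y ω| / c := by
      refine le_trans (abs_add_le _ _) ?_
      rw [abs_div, abs_mul, abs_of_nonneg hc.le]
    calc |φ 0| + (L:ℝ) * |s + lam * Y ω / c| ≤ |φ 0| + L * (|s| + |lam| * |Y ω| / c) := by
          gcongr
      _ = |φ 0| + L * |s| + (L * |lam| / c) * |Y ω| := by ring
  calc ∫ ω, |φ (s + lam * Y ω / c)| ∂P
      ≤ ∫ ω, (|φ 0| + L * |s| + (L * |lam| / c) * |Y ω|) ∂P := by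
        refine integral_mono (Gf_int hY hYint hφ hc s lam).abs ?_ hpt
        exact (integrable_const _).add (hYint.abs.const_mul _)
    _ = |φ 0| + L * |s| + (L * |lam| / c) * ∫ ω, |Y ω| ∂P := by
        rw [integral_add (integrable_const _) (hYint.abs.const_mul _),
          MeasureTheory.integral_const_mul, integral_const]
        simp

include hY hYint hφ hc hab in
lemma Psif_attained (s : ℝ) : ∃ lam ∈ Set.Icc a b, Gf P Y φ c s lam = Psif P Y φ c a b s := by
  have hcomp : IsCompact (Gf P Y φ c s '' Set.Icc a b) :=
    isCompact_Icc.image ((Gf_cont hY hYint hφ hc).comp (Continuous.prodMk_right s))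
  have hne : (Gf P Y φ c s '' Set.Icc a b).Nonempty :=
    ⟨_, Set.mem_image_of_mem _ (Set.left_mem_Icc.2 hab)⟩
  obtain ⟨lam, hlam, hval⟩ := hcomp.sSup_mem hne
  exact ⟨lam, hlam, hval⟩

include hY hYint hφ hc in
lemma Gf_le_Psif (s : ℝ) {lam : ℝ} (hlam : lam ∈ Set.Icc a b) :
    Gf P Y φ c s lam ≤ Psif P Y φ c a b s := by
  have hcomp : IsCompact (Gf P Y φ c s '' Set.Icc a b) :=
    isCompact_Icc.image ((Gf_cont hY hYint hφ hc).comp (Continuous.prodMk_right s))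
  exact le_csSup hcomp.bddAbove (Set.mem_image_of_mem _ hlam)

include hY hYint hφ hc hab in
lemma Psif_lip : LipschitzWith L (Psif P Y φ c a b) := by
  have key : ∀ s s' : ℝ, Psif P Y φ c a b s - Psif P Y φ c a b s' ≤ L * |s - s'| := by
    intro s s'
    obtain ⟨lam, hlam, hval⟩ := Psif_attained hY hYint hφ hc hab s
    have h1 := Gf_le_Psif hY hYint hφ hc (a := a) (b := b) s' hlam
    have h2 := Gf_lip_s hY hYint hφ hc lam s s'
    rw [abs_sub_le_iff] at h2
    linarith [h2.1]
  refine LipschitzWith.of_dist_le_mul fun s s' => ?_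
  rw [Real.dist_eq, Real.dist_eq, abs_sub_le_iff]
  refine ⟨key s s', ?_⟩
  have := key s' s
  rwa [abs_sub_comm] at this

include hY hYint hφ hc hab in
lemma Psif_bound (s : ℝ) :
    |Psif P Y φ c a b s| ≤ |φ 0| + L * |s| + (L * max |a| |b| / c) * ∫ ω, |Y ω| ∂P := by
  obtain ⟨lam, hlam, hval⟩ := Psif_attained hY hYint hφ hc hab s
  rw [← hval]
  refine le_trans (Gf_bound hY hYint hφ hc s lam) ?_
  have h1 : |lam| ≤ max |a| |b| := abs_le_max_abs_abs hlam.1 hlam.2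
  have h2 : (0:ℝ) ≤ ∫ ω, |Y ω| ∂P := integral_nonneg fun ω => abs_nonneg _
  gcongr

include hY hYint hφ hc hab in
lemma Psif_selection {ε : ℝ} (hε : 0 < ε) :
    ∃ τ : ℝ → ℝ, Measurable τ ∧ (∀ s, τ s ∈ Set.Icc a b) ∧
      ∀ s, Psif P Y φ c a b s - ε ≤ Gf P Y φ c s (τ s) := by
  haveI : Nonempty (Set.Icc a b) := (Set.nonempty_Icc.2 hab).to_subtype
  obtain ⟨u, hu⟩ := TopologicalSpace.exists_dense_seq (Set.Icc a b)
  classical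
  set p : ℕ → ℝ → Prop := fun k s => Psif P Y φ c a b s - ε < Gf P Y φ c s (u k : ℝ) with hp
  have hex : ∀ s, ∃ k, p k s := by
    intro s
    obtain ⟨lam, hlam, hval⟩ := Psif_attained hY hYint hφ hc hab s
    have hcontG : Continuous (fun x : ℝ => Gf P Y φ c s x) :=
      (Gf_cont hY hYint hφ hc).comp (Continuous.prodMk_right s)
    set U : Set ℝ := {x | Psif P Y φ c a b s - ε < Gf P Y φ c s x} with hU
    have hUopen : IsOpen U := isOpen_lt continuous_const hcontG
    have hmemU : (⟨lam, hlam⟩ : Set.Icc a b) ∈ (Subtype.val ⁻¹' U : Set (Set.Icc a b)) := by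
      simp only [Set.mem_preimage, hU, Set.mem_setOf_eq, hval]
      linarith
    obtain ⟨k, hk⟩ := hu.exists_mem_open (hUopen.preimage continuous_subtype_val)
      ⟨_, hmemU⟩
    exact ⟨k, hk⟩
  refine ⟨fun s => (u (Nat.find (hex s)) : ℝ), ?_, fun s => (u _).2,
    fun s => le_of_lt (Nat.find_spec (hex s))⟩
  have hmeasp : ∀ k, MeasurableSet {s | p k s} := by
    intro k
    have hc1 : Continuous fun s : ℝ => Gf P Y φ c s (u k : ℝ) :=
      (Gf_cont hY hYint hφ hc).comp (continuous_id.prodMk continuous_const)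
    have hc2 : Continuous (Psif P Y φ c a b) := (Psif_lip hY hYint hφ hc hab).continuous
    exact measurableSet_lt ((hc2.measurable).sub measurable_const) hc1.measurable
  exact Measurable.find (f := fun k (_ : ℝ) => (u k : ℝ)) (fun k => measurable_const) hmeasp hex
end Psec

lemma integrable_comp_fst {μ ν : Measure ℝ} [IsProbabilityMeasure μ] [IsProbabilityMeasure ν]
    {g : ℝ → ℝ} (hg : Measurable g) (h : Integrable g μ) :
    Integrable (fun q : ℝ × ℝ => g q.1) (μ.prod ν) := by
  have hmap : (μ.prod ν).map Prod.fst = μ := by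
    rw [Measure.map_fst_prod]; simp
  have h2 : Integrable g ((μ.prod ν).map Prod.fst) := by rw [hmap]; exact h
  exact (integrable_map_measure hg.aestronglyMeasurable measurable_fst.aemeasurable).mp h2

lemma integrable_comp_snd {μ ν : Measure ℝ} [IsProbabilityMeasure μ] [IsProbabilityMeasure ν]
    {g : ℝ → ℝ} (hg : Measurable g) (h : Integrable g ν) :
    Integrable (fun q : ℝ × ℝ => g q.2) (μ.prod ν) := by
  have hmap : (μ.prod ν).map Prod.snd = ν := by
    rw [Measure.map_snd_prod]; simp
  have h2 : Integrable g ((μ.prod ν).map Prod.snd) := by rw [hmap]; exact h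
  exact (integrable_map_measure hg.aestronglyMeasurable measurable_snd.aemeasurable).mp h2

lemma fubini_step {Ω : Type*} [MeasurableSpace Ω] (P : Measure Ω) [IsProbabilityMeasure P]
    (W Z Y : Ω → ℝ) (hW : Measurable W) (hZ : Measurable Z) (hY : Measurable Y)
    (hindep : ProbabilityTheory.IndepFun W Z P)
    (hid : ProbabilityTheory.IdentDistrib Z Y P P)
    (hWint : Integrable W P) (hYint : Integrable Y P)
    (c : ℝ) (hc : 0 < c) (σi : ℝ → ℝ) (hσi : Measurable σi) {Cb : ℝ} (hσb : ∀ s, |σi s| ≤ Cb)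
    (φ : ℝ → ℝ) {L : NNReal} (hφ : LipschitzWith L φ)
    (hGmeas : Measurable (fun w => Gf P Y φ c w (σi w))) :
    ∫ ω, φ (W ω + σi (W ω) * Z ω / c) ∂P = ∫ ω, Gf P Y φ c (W ω) (σi (W ω)) ∂P := by
  have hZint : Integrable Z P := hid.symm.integrable_snd hYint
  have hCb : 0 ≤ Cb := le_trans (abs_nonneg _) (hσb 0)
  set h : ℝ × ℝ → ℝ := fun q => φ (q.1 + σi q.1 * q.2 / c) with hh
  have hhm : Measurable h :=
    hφ.continuous.measurable.comp
      (measurable_fst.add (((hσi.comp measurable_fst).mul measurable_snd).div_const _))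
  have hmapeq : P.map (fun ω => (W ω, Z ω)) = (P.map W).prod (P.map Z) :=
    (ProbabilityTheory.indepFun_iff_map_prod_eq_prod_map_map
      hW.aemeasurable hZ.aemeasurable).mp hindep
  haveI : IsProbabilityMeasure (P.map W) := Measure.isProbabilityMeasure_map hW.aemeasurable
  haveI : IsProbabilityMeasure (P.map Z) := Measure.isProbabilityMeasure_map hZ.aemeasurable
  have hWid : Integrable (fun x : ℝ => |x|) (P.map W) := by
    refine (integrable_map_measure measurable_abs.aestronglyMeasurable hW.aemeasurable).mpr ?_
    exact hWint.abs
  have hZid : Integrable (fun x : ℝ => |x|) (P.map Z) := by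
    refine (integrable_map_measure measurable_abs.aestronglyMeasurable hZ.aemeasurable).mpr ?_
    exact hZint.abs
  have hint : Integrable h ((P.map W).prod (P.map Z)) := by
    refine Integrable.mono' (g := fun q => |φ 0| + L * |q.1| + (L * Cb / c) * |q.2|)
      ?_ hhm.aestronglyMeasurable ?_
    · refine Integrable.add (Integrable.add (integrable_const _) ?_) ?_
      · exact (integrable_comp_fst measurable_abs hWid).const_mul _
      · exact (integrable_comp_snd measurable_abs hZid).const_mul _
    · filter_upwards with q
      rw [Real.norm_eq_abs]
      refine le_trans (phi_abs_le hφ _) ?_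
      have h1 : |q.1 + σi q.1 * q.2 / c| ≤ |q.1| + Cb * |q.2| / c := by
        refine le_trans (abs_add_le _ _) ?_
        rw [abs_div, abs_mul, abs_of_nonneg hc.le]
        gcongr
        exact hσb _
      calc |φ 0| + (L:ℝ) * |q.1 + σi q.1 * q.2 / c|
          ≤ |φ 0| + L * (|q.1| + Cb * |q.2| / c) := by gcongr
        _ = |φ 0| + L * |q.1| + (L * Cb / c) * |q.2| := by ring
  have hinner : ∀ w : ℝ, ∫ z, h (w, z) ∂(P.map Z) = Gf P Y φ c w (σi w) := by
    intro w
    rw [hid.map_eq]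
    rw [integral_map hY.aemeasurable]
    · rfl
    · exact (hφ.continuous.measurable.comp
        ((measurable_const (a := w)).add (((measurable_const (a := σi w)).mul
          measurable_id).div_const c))).aestronglyMeasurable
  calc ∫ ω, φ (W ω + σi (W ω) * Z ω / c) ∂P
      = ∫ q, h q ∂(P.map (fun ω => (W ω, Z ω))) := by
        rw [integral_map (hW.aemeasurable.prodMk hZ.aemeasurable) hhm.aestronglyMeasurable]
    _ = ∫ q, h q ∂((P.map W).prod (P.map Z)) := by rw [hmapeq]
    _ = ∫ w, ∫ z, h (w, z) ∂(P.map Z) ∂(P.map W) := integral_prod _ hint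
    _ = ∫ w, Gf P Y φ c w (σi w) ∂(P.map W) := by
        exact integral_congr_ae (Filter.Eventually.of_forall hinner)
    _ = ∫ ω, Gf P Y φ c (W ω) (σi (W ω)) ∂P := by
        rw [integral_map hW.aemeasurable hGmeas.aestronglyMeasurable]

lemma WS_indep {Ω : Type*} [MeasurableSpace Ω] {P : Measure Ω} [IsProbabilityMeasure P]
    (X : ℕ → Ω → ℝ) (hX : ∀ i, Measurable (X i))
    (n : ℕ) (σ : ℕ → ℝ → ℝ) (hσ : ∀ j, Measurable (σ j))
    (hindep : ProbabilityTheory.iIndepFun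
      (fun i : Fin n => X i) P)
    (i : ℕ) (hi : i < n) : ProbabilityTheory.IndepFun (WS X n σ i) (X i) P := by
  obtain ⟨F, hF, hFe⟩ := WS_comp X n σ hσ i
  classical
  set S : Finset (Fin n) := Finset.univ.filter (fun j => (j : ℕ) < i) with hS
  set T : Finset (Fin n) := {⟨i, hi⟩} with hT
  have hST : Disjoint S T := by
    rw [Finset.disjoint_left]
    rintro j hj hj'
    simp only [hS, Finset.mem_filter] at hj
    simp only [hT, Finset.mem_singleton] at hj'
    subst hj'
    exact lt_irrefl _ hj.2
  have h1 := hindep.indepFun_finset S T hST (fun j => hX j)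
  set g1 : ({x // x ∈ S} → ℝ) → ℝ :=
    fun v => F (fun j : Fin i => v ⟨⟨(j : ℕ), lt_trans j.2 hi⟩, by
      simp [hS]⟩) with hg1def
  set g2 : ({x // x ∈ T} → ℝ) → ℝ := fun v => v ⟨⟨i, hi⟩, by simp [hT]⟩ with hg2def
  have hg1 : Measurable g1 := hF.comp (measurable_pi_lambda _ fun j => measurable_pi_apply _)
  have hg2 : Measurable g2 := measurable_pi_apply _
  have h2 := h1.comp hg1 hg2
  have e1 : (g1 ∘ fun a (j : {x // x ∈ S}) => X (j : Fin n) a) = WS X n σ i := by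
    funext ω
    simp only [Function.comp_apply, hg1def]
    exact (hFe ω).symm
  have e2 : (g2 ∘ fun a (j : {x // x ∈ T}) => X (j : Fin n) a) = X i := rfl
  rwa [e1, e2] at h2

/-- Dynamic programming principle for the approximation of the `G`-normal distribution:
`sup_σ E[φ(W^σ_{i+1})] = sup_σ E[Ψ(W^σ_i)]` where `Ψ(s) = sup_{λ∈[σ_,σ̄]} E[φ(s + λX_1/√n)]`
and the suprema are over all sequences of measurable functions `σ_i : ℝ → [σ_, σ̄]`. -/
theorem stmt15 {Ω : Type*} [MeasurableSpace Ω] (P : Measure Ω) [IsProbabilityMeasure P]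
    (X : ℕ → Ω → ℝ) (hmeas : ∀ i, Measurable (X i))
    (n : ℕ) (hn : 1 ≤ n)
    (hindep : ProbabilityTheory.iIndepFun
      (fun i : Fin n => X i) P)
    (hid : ∀ i < n, ProbabilityTheory.IdentDistrib (X i) (X 0) P P)
    (hm1 : ∫ ω, X 0 ω ∂P = 0) (hm2 : ∫ ω, (X 0 ω) ^ 2 ∂P = 1)
    (hm3 : Integrable (fun ω => |X 0 ω| ^ 3) P)
    (σlow σbar : ℝ) (h0 : 0 < σlow) (hσ : σlow ≤ σbar)
    (φ : ℝ → ℝ) (L : NNReal) (hφ : LipschitzWith L φ)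
    (i : ℕ) (hi : i < n) :
    sSup ((fun σ : ℕ → ℝ → ℝ => ∫ ω, φ (WS X n σ (i + 1) ω) ∂P) ''
        {σ | ∀ j, Measurable (σ j) ∧ ∀ s, σ j s ∈ Set.Icc σlow σbar}) =
    sSup ((fun σ : ℕ → ℝ → ℝ => ∫ ω,
          sSup ((fun lam : ℝ =>
              ∫ ω', φ (WS X n σ i ω + lam * X 0 ω' / Real.sqrt n) ∂P) ''
            Set.Icc σlow σbar) ∂P) ''
        {σ | ∀ j, Measurable (σ j) ∧ ∀ s, σ j s ∈ Set.Icc σlow σbar}) := by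
  classical
  have hc : (0:ℝ) < Real.sqrt (n:ℝ) := Real.sqrt_pos.2 (by exact_mod_cast hn)
  set c : ℝ := Real.sqrt (n:ℝ) with hcdef
  have hY : Measurable (X 0) := hmeas 0
  have hYint : Integrable (X 0) P := by
    refine Integrable.mono' ((integrable_const 1).add hm3) hY.aestronglyMeasurable ?_
    filter_upwards with ω
    rw [Real.norm_eq_abs]
    have hx0 : (0:ℝ) ≤ |X 0 ω| := abs_nonneg _
    simp only [Pi.add_apply]
    rcases le_or_gt (|X 0 ω|) 1 with h | h
    · have h3 : (0:ℝ) ≤ |X 0 ω| ^ 3 := pow_nonneg hx0 3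
      linarith
    · nlinarith [mul_nonneg (mul_nonneg hx0 (by linarith : (0:ℝ) ≤ |X 0 ω| - 1))
        (by linarith : (0:ℝ) ≤ |X 0 ω| + 1)]
  set A : Set (ℕ → ℝ → ℝ) := {σ | ∀ j, Measurable (σ j) ∧ ∀ s, σ j s ∈ Set.Icc σlow σbar}
    with hA
  have hPsi : (fun σ : ℕ → ℝ → ℝ => ∫ ω,
        sSup ((fun lam : ℝ =>
            ∫ ω', φ (WS X n σ i ω + lam * X 0 ω' / Real.sqrt n) ∂P) ''
          Set.Icc σlow σbar) ∂P)
      = fun σ : ℕ → ℝ → ℝ => ∫ ω, Psif P (X 0) φ c σlow σbar (WS X n σ i ω) ∂P := rfl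
  rw [hPsi]
  set I0 : ℝ := ∫ ω, |X 0 ω| ∂P with hI0
  have hI0n : (0:ℝ) ≤ I0 := integral_nonneg fun ω => abs_nonneg _
  set M : ℝ := max |σlow| |σbar| with hM
  have hMn : (0:ℝ) ≤ M := le_trans (abs_nonneg _) (le_max_left _ _)
  set K : ℝ := |φ 0| + (L * M / c) * I0 with hK
  set B : ℝ := K + L * ((σbar / c) * (n * I0)) with hB
  have hXjint : ∀ j, j < n → Integrable (X j) P := fun j hj =>
    (hid j hj).symm.integrable_snd hYint
  have habsA : ∀ σ ∈ A, ∀ (j : ℕ) (s : ℝ), |σ j s| ≤ σbar := by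
    intro σ hσA j s
    have h2 := (hσA j).2 s
    rw [abs_le]
    exact ⟨by linarith [h2.1], h2.2⟩
  have hWm : ∀ σ ∈ A, Measurable (WS X n σ i) := fun σ hσA =>
    WS_meas X hmeas n σ (fun j => (hσA j).1) i
  have hWint : ∀ σ ∈ A, Integrable (WS X n σ i) P := by
    intro σ hσA
    refine Integrable.mono'
      (g := fun ω => (σbar / c) * ∑ j ∈ Finset.range i, |X j ω|) ?_
      (hWm σ hσA).aestronglyMeasurable ?_
    · exact (integrable_finset_sum _ (fun j hj =>
        (hXjint j (lt_trans (Finset.mem_range.1 hj) hi)).abs)).const_mul _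
    · filter_upwards with ω
      rw [Real.norm_eq_abs]
      exact WS_abs_le X n hn σ (habsA σ hσA) i ω
  have hWabs : ∀ σ ∈ A, ∫ ω, |WS X n σ i ω| ∂P ≤ (σbar / c) * ((n:ℝ) * I0) := by
    intro σ hσA
    have hbint : Integrable (fun ω => (σbar / c) * ∑ j ∈ Finset.range i, |X j ω|) P :=
      (integrable_finset_sum _ (fun j hj =>
        (hXjint j (lt_trans (Finset.mem_range.1 hj) hi)).abs)).const_mul _
    calc ∫ ω, |WS X n σ i ω| ∂P
        ≤ ∫ ω, (σbar / c) * ∑ j ∈ Finset.range i, |X j ω| ∂P :=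
          integral_mono (hWint σ hσA).abs hbint (fun ω => WS_abs_le X n hn σ (habsA σ hσA) i ω)
      _ = (σbar / c) * ∑ j ∈ Finset.range i, ∫ ω, |X j ω| ∂P := by
          rw [MeasureTheory.integral_const_mul, integral_finset_sum _ (fun j hj =>
            (hXjint j (lt_trans (Finset.mem_range.1 hj) hi)).abs)]
      _ = (σbar / c) * ((i:ℝ) * I0) := by
          congr 1
          have : ∀ j ∈ Finset.range i, ∫ ω, |X j ω| ∂P = I0 := by
            intro j hj
            exact ((hid j (lt_trans (Finset.mem_range.1 hj) hi)).comp
              measurable_abs).integral_eq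
          rw [Finset.sum_congr rfl this, Finset.sum_const, Finset.card_range, nsmul_eq_mul]
      _ ≤ (σbar / c) * ((n:ℝ) * I0) := by
          have hσb : (0:ℝ) ≤ σbar := le_trans h0.le hσ
          have hin : (i:ℝ) ≤ (n:ℝ) := by exact_mod_cast hi.le
          have h1 : (0:ℝ) ≤ σbar / c := div_nonneg hσb hc.le
          have h2 : (i:ℝ) * I0 ≤ (n:ℝ) * I0 := mul_le_mul_of_nonneg_right hin hI0n
          exact mul_le_mul_of_nonneg_left h2 h1
  have hGτint : ∀ σ ∈ A, ∀ τ : ℝ → ℝ, Measurable τ → (∀ s, τ s ∈ Set.Icc σlow σbar) →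
      Integrable (fun ω => Gf P (X 0) φ c (WS X n σ i ω) (τ (WS X n σ i ω))) P := by
    intro σ hσA τ hτm hτmem
    refine Integrable.mono' (g := fun ω => K + L * |WS X n σ i ω|)
      ((integrable_const _).add ((hWint σ hσA).abs.const_mul _)) ?_ ?_
    · exact (((Gf_cont hY hYint hφ hc).measurable.comp
        (measurable_id.prodMk hτm)).comp (hWm σ hσA)).aestronglyMeasurable
    · filter_upwards with ω
      rw [Real.norm_eq_abs]
      refine le_trans (Gf_bound hY hYint hφ hc _ _) ?_
      have hτM : |τ (WS X n σ i ω)| ≤ M :=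
        abs_le_max_abs_abs (hτmem _).1 (hτmem _).2
      have : ((L:ℝ) * |τ (WS X n σ i ω)| / c) * I0 ≤ ((L:ℝ) * M / c) * I0 := by
        gcongr
      rw [hK]
      linarith
  have hPsiint : ∀ σ ∈ A, Integrable
      (fun ω => Psif P (X 0) φ c σlow σbar (WS X n σ i ω)) P := by
    intro σ hσA
    refine Integrable.mono' (g := fun ω => K + L * |WS X n σ i ω|)
      ((integrable_const _).add ((hWint σ hσA).abs.const_mul _)) ?_ ?_
    · exact ((Psif_lip hY hYint hφ hc hσ).continuous.measurable.comp
        (hWm σ hσA)).aestronglyMeasurable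
    · filter_upwards with ω
      rw [Real.norm_eq_abs]
      refine le_trans (Psif_bound hY hYint hφ hc hσ _) ?_
      rw [hK]
      linarith
  have key1 : ∀ σ ∈ A, ∫ ω, φ (WS X n σ (i+1) ω) ∂P =
      ∫ ω, Gf P (X 0) φ c (WS X n σ i ω) (σ i (WS X n σ i ω)) ∂P := by
    intro σ hσA
    have hGmeas : Measurable (fun w => Gf P (X 0) φ c w (σ i w)) :=
      (Gf_cont hY hYint hφ hc).measurable.comp (measurable_id.prodMk (hσA i).1)
    exact fubini_step P (WS X n σ i) (X i) (X 0) (hWm σ hσA) (hmeas i) hY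
      (WS_indep X hmeas n σ (fun j => (hσA j).1) hindep i hi) (hid i hi)
      (hWint σ hσA) hYint c hc (σ i) (hσA i).1 (habsA σ hσA i) φ hφ hGmeas
  have hval12 : ∀ σ ∈ A, ∫ ω, φ (WS X n σ (i+1) ω) ∂P ≤
      ∫ ω, Psif P (X 0) φ c σlow σbar (WS X n σ i ω) ∂P := by
    intro σ hσA
    rw [key1 σ hσA]
    refine integral_mono (hGτint σ hσA (σ i) (hσA i).1 (hσA i).2) (hPsiint σ hσA) ?_
    intro ω
    exact Gf_le_Psif hY hYint hφ hc _ ((hσA i).2 _)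
  have hval2B : ∀ σ ∈ A, ∫ ω, Psif P (X 0) φ c σlow σbar (WS X n σ i ω) ∂P ≤ B := by
    intro σ hσA
    calc ∫ ω, Psif P (X 0) φ c σlow σbar (WS X n σ i ω) ∂P
        ≤ ∫ ω, (K + L * |WS X n σ i ω|) ∂P := by
          refine integral_mono (hPsiint σ hσA)
            ((integrable_const _).add ((hWint σ hσA).abs.const_mul _)) ?_
          intro ω
          refine le_trans (le_abs_self _) ?_
          refine le_trans (Psif_bound hY hYint hφ hc hσ _) ?_
          rw [hK]; linarith
      _ = K + L * ∫ ω, |WS X n σ i ω| ∂P := by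
          rw [integral_add (integrable_const _) ((hWint σ hσA).abs.const_mul _),
            integral_const, MeasureTheory.integral_const_mul]
          simp
      _ ≤ B := by
          rw [hB]
          have h1 := hWabs σ hσA
          have hL : (0:ℝ) ≤ L := L.2
          have h2 := mul_le_mul_of_nonneg_left h1 hL
          linarith
  have hσ0A : (fun (_ : ℕ) (_ : ℝ) => σlow) ∈ A := by
    intro j
    exact ⟨measurable_const, fun s => ⟨le_refl _, hσ⟩⟩
  have hne1 : ((fun σ : ℕ → ℝ → ℝ => ∫ ω, φ (WS X n σ (i + 1) ω) ∂P) '' A).Nonempty :=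
    ⟨_, Set.mem_image_of_mem _ hσ0A⟩
  have hne2 : ((fun σ : ℕ → ℝ → ℝ =>
      ∫ ω, Psif P (X 0) φ c σlow σbar (WS X n σ i ω) ∂P) '' A).Nonempty :=
    ⟨_, Set.mem_image_of_mem _ hσ0A⟩
  have hbdd1 : BddAbove ((fun σ : ℕ → ℝ → ℝ => ∫ ω, φ (WS X n σ (i + 1) ω) ∂P) '' A) := by
    refine ⟨B, ?_⟩
    rintro v ⟨σ, hσA, rfl⟩
    exact le_trans (hval12 σ hσA) (hval2B σ hσA)
  have hbdd2 : BddAbove ((fun σ : ℕ → ℝ → ℝ =>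
      ∫ ω, Psif P (X 0) φ c σlow σbar (WS X n σ i ω) ∂P) '' A) := by
    refine ⟨B, ?_⟩
    rintro v ⟨σ, hσA, rfl⟩
    exact hval2B σ hσA
  apply le_antisymm
  · refine csSup_le hne1 ?_
    rintro v ⟨σ, hσA, rfl⟩
    exact le_trans (hval12 σ hσA) (le_csSup hbdd2 (Set.mem_image_of_mem _ hσA))
  · refine csSup_le hne2 ?_
    rintro v ⟨σ, hσA, rfl⟩
    refine le_of_forall_pos_le_add ?_
    intro ε hε
    obtain ⟨τ, hτm, hτmem, hτsel⟩ := Psif_selection hY hYint hφ hc hσ hε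
    set σ' : ℕ → ℝ → ℝ := Function.update σ i τ with hσ'def
    have hσ'A : σ' ∈ A := by
      intro j
      rcases eq_or_ne j i with rfl | hj
      · rw [hσ'def]
        simp only [Function.update_self]
        exact ⟨hτm, hτmem⟩
      · rw [hσ'def]
        simp only [Function.update_of_ne hj]
        exact hσA j
    have hWeq : WS X n σ' i = WS X n σ i := by
      refine WS_congr X n i ?_
      intro j hj
      rw [hσ'def, Function.update_of_ne (Nat.ne_of_lt hj)]
    have hτi : σ' i = τ := by rw [hσ'def]; simp
    have hkey := key1 σ' hσ'A
    rw [hWeq, hτi] at hkey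
    have hstep : ∫ ω, Psif P (X 0) φ c σlow σbar (WS X n σ i ω) ∂P ≤
        (∫ ω, Gf P (X 0) φ c (WS X n σ i ω) (τ (WS X n σ i ω)) ∂P) + ε := by
      have hint1 := hGτint σ hσA τ hτm hτmem
      calc ∫ ω, Psif P (X 0) φ c σlow σbar (WS X n σ i ω) ∂P
          ≤ ∫ ω, (Gf P (X 0) φ c (WS X n σ i ω) (τ (WS X n σ i ω)) + ε) ∂P := by
            refine integral_mono (hPsiint σ hσA) (hint1.add (integrable_const _)) ?_
            intro ω
            have := hτsel (WS X n σ i ω)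
            dsimp only
            linarith
        _ = (∫ ω, Gf P (X 0) φ c (WS X n σ i ω) (τ (WS X n σ i ω)) ∂P) + ε := by
            rw [integral_add hint1 (integrable_const _), integral_const]
            simp
    refine le_trans hstep ?_
    have hle : (∫ ω, Gf P (X 0) φ c (WS X n σ i ω) (τ (WS X n σ i ω)) ∂P) ≤
        sSup ((fun σ : ℕ → ℝ → ℝ => ∫ ω, φ (WS X n σ (i + 1) ω) ∂P) '' A) := by
      rw [← hkey]
      exact le_csSup hbdd1 (Set.mem_image_of_mem _ hσ'A)
    linarith
end

section
/- Let 𝒫 ⊂ ℝ^d be a bounded convex polytope, let v be a vertex of 𝒫, and let T_v := {v + c(u − v) : u ∈ 𝒫, c ≥ 0} be the closed convex cone with apex v generated by 𝒫. Define φ : ℝ^d → ℝ by φ(x) := d_{T_v − v}(x)² = inf_{y ∈ T_v − v} |x − y|², where T_v − v := {w − v : w ∈ T_v}. Then: (i) φ is differentiable on all of ℝ^d; (ii) its gradient Dφ : ℝ^d → ℝ^d is Lipschitz with constant 2; and (iii) for every x ∈ ℝ^d, v · Dφ(x) = sup_{μ ∈ 𝒫} μ · Dφ(x). -/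
open RealInnerProductSpace Metric

section Aux

variable {E : Type*} [NormedAddCommGroup E] [InnerProductSpace ℝ E] [CompleteSpace E]

/-- Existence of the metric projection onto a nonempty closed convex set, together with
its variational characterization. -/
theorem aux_proj17 (D : Set E) (hne : D.Nonempty) (hcl : IsClosed D) (hconv : Convex ℝ D) :
    ∃ P : E → E, (∀ x, P x ∈ D) ∧ (∀ x, infDist x D = ‖x - P x‖) ∧
      (∀ x, ∀ w ∈ D, ⟪x - P x, w - P x⟫ ≤ 0) := by
  have h := exists_norm_eq_iInf_of_complete_convex hne hcl.isComplete hconv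
  choose P hPD hPeq using h
  refine ⟨P, hPD, ?_, ?_⟩
  · intro x
    rw [hPeq x, infDist_eq_iInf]
    congr 1
    ext w
    rw [dist_eq_norm]
  · intro x
    exact (norm_eq_iInf_iff_real_inner_le_zero hconv (hPD x)).1 (hPeq x)

/-- The squared distance to a set with projection map `P` has gradient `2 • (x - P x)`. -/
theorem aux_grad17 (D : Set E) (P : E → E) (hPD : ∀ x, P x ∈ D)
    (hdist : ∀ x, infDist x D = ‖x - P x‖)
    (hvar : ∀ x, ∀ w ∈ D, ⟪x - P x, w - P x⟫ ≤ 0) (x : E) :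
    HasGradientAt (fun y => (infDist y D) ^ 2) ((2 : ℝ) • (x - P x)) x := by
  rw [hasGradientAt_iff_isLittleO]
  have key : ∀ y : E,
      |(infDist y D) ^ 2 - (infDist x D) ^ 2 - ⟪(2 : ℝ) • (x - P x), y - x⟫| ≤ ‖y - x‖ ^ 2 := by
    intro y
    have hinner : ⟪(2 : ℝ) • (x - P x), y - x⟫ = 2 * ⟪x - P x, y - x⟫ :=
      real_inner_smul_left _ _ _
    -- upper bound
    have h1 : infDist y D ≤ ‖y - P x‖ := by
      rw [← dist_eq_norm]; exact infDist_le_dist_of_mem (hPD x)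
    have h2 : ‖y - P y‖ ^ 2 ≤ ‖y - P x‖ ^ 2 := by
      rw [← hdist y]
      have := infDist_nonneg (x := y) (s := D)
      nlinarith
    have hexp : ‖y - P x‖ ^ 2 = ‖x - P x‖ ^ 2 + 2 * ⟪x - P x, y - x⟫ + ‖y - x‖ ^ 2 := by
      have h : y - P x = (x - P x) + (y - x) := by abel
      rw [h, norm_add_sq_real]
    -- lower bound
    have h3 : ‖x - P x‖ ^ 2 + 2 * ⟪y - P y, x - P x⟫ - 2 * ‖x - P x‖ ^ 2 ≤ ‖y - P y‖ ^ 2 := by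
      nlinarith [norm_sub_sq_real (y - P y) (x - P x), sq_nonneg ‖(y - P y) - (x - P x)‖]
    have h4 : ⟪y - P y, x - P x⟫ = ⟪x - P x, y - P y⟫ := real_inner_comm _ _
    have h5 : ⟪x - P x, P y - P x⟫ ≤ 0 := hvar x (P y) (hPD y)
    have h6 : ⟪x - P x, y - P y⟫ = ⟪x - P x, y - x⟫ + ‖x - P x‖ ^ 2 - ⟪x - P x, P y - P x⟫ := by
      have h : y - P y = (y - x) + (x - P x) - (P y - P x) := by abel
      rw [h, inner_sub_right, inner_add_right, real_inner_self_eq_norm_sq]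
    rw [hdist x, hdist y, hinner]
    rw [abs_le]
    constructor
    · nlinarith [sq_nonneg ‖y - x‖]
    · nlinarith
  rw [Asymptotics.isLittleO_iff]
  intro c hc
  rw [Metric.eventually_nhds_iff]
  refine ⟨c, hc, fun y hy => ?_⟩
  have h1 : ‖y - x‖ < c := by rwa [← dist_eq_norm]
  calc ‖(infDist y D) ^ 2 - (infDist x D) ^ 2 - ⟪(2 : ℝ) • (x - P x), y - x⟫‖
      = |(infDist y D) ^ 2 - (infDist x D) ^ 2 - ⟪(2 : ℝ) • (x - P x), y - x⟫| :=
        Real.norm_eq_abs _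
    _ ≤ ‖y - x‖ ^ 2 := key y
    _ = ‖y - x‖ * ‖y - x‖ := sq ‖y - x‖
    _ ≤ c * ‖y - x‖ := mul_le_mul_of_nonneg_right h1.le (norm_nonneg _)

end Aux

/-- Properties of the squared distance to the translated cone of a polytope at a vertex
(Lemma 5.1): with `T_v = {v + c(u − v) : u ∈ 𝒫, c ≥ 0}` and `φ(x) = d_{T_v − v}(x)²`,
the function `φ` is differentiable, its gradient is Lipschitz with constant `2`, and
`v · Dφ(x) = sup_{μ∈𝒫} μ · Dφ(x)` for all `x`. -/
theorem stmt17 {d : ℕ} (V : Finset (EuclideanSpace ℝ (Fin d)))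
    (K : Set (EuclideanSpace ℝ (Fin d)))
    (hK : K = convexHull ℝ (V : Set (EuclideanSpace ℝ (Fin d))))
    (v : EuclideanSpace ℝ (Fin d)) (hv : v ∈ Set.extremePoints ℝ K) :
    let Tv : Set (EuclideanSpace ℝ (Fin d)) :=
      {w | ∃ u ∈ K, ∃ c : ℝ, 0 ≤ c ∧ w = v + c • (u - v)}
    let φ : EuclideanSpace ℝ (Fin d) → ℝ :=
      fun x => (Metric.infDist x ((fun w => w - v) '' Tv)) ^ 2
    Differentiable ℝ φ ∧
    LipschitzWith 2 (gradient φ) ∧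
    ∀ x, ∀ μ ∈ K, ⟪μ, gradient φ x⟫ ≤ ⟪v, gradient φ x⟫ := by
  intro Tv φ
  classical
  have hvK : v ∈ K := hv.1
  have hKconv : Convex ℝ K := hK ▸ convex_convexHull ℝ _
  set C : Set (EuclideanSpace ℝ (Fin d)) := (fun w => w - v) '' Tv with hCdef
  have hmemC : ∀ w, w ∈ C ↔ ∃ u ∈ K, ∃ c : ℝ, 0 ≤ c ∧ w = c • (u - v) := by
    intro w
    constructor
    · rintro ⟨t, ⟨u, hu, c, hc, rfl⟩, rfl⟩
      exact ⟨u, hu, c, hc, add_sub_cancel_left v _⟩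
    · rintro ⟨u, hu, c, hc, rfl⟩
      exact ⟨v + c • (u - v), ⟨u, hu, c, hc, rfl⟩, add_sub_cancel_left v _⟩
  have h0C : (0 : EuclideanSpace ℝ (Fin d)) ∈ C :=
    (hmemC 0).2 ⟨v, hvK, 0, le_refl 0, by simp⟩
  have hsmulC : ∀ t : ℝ, 0 ≤ t → ∀ w ∈ C, t • w ∈ C := by
    intro t ht w hw
    obtain ⟨u, hu, c, hc, rfl⟩ := (hmemC w).1 hw
    exact (hmemC _).2 ⟨u, hu, t * c, mul_nonneg ht hc, smul_smul t c _⟩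
  have haddC : ∀ w₁ ∈ C, ∀ w₂ ∈ C, w₁ + w₂ ∈ C := by
    intro w₁ hw₁ w₂ hw₂
    obtain ⟨u₁, hu₁, c₁, hc₁, rfl⟩ := (hmemC w₁).1 hw₁
    obtain ⟨u₂, hu₂, c₂, hc₂, rfl⟩ := (hmemC w₂).1 hw₂
    by_cases hs : c₁ + c₂ = 0
    · have h1 : c₁ = 0 := by linarith
      have h2 : c₂ = 0 := by linarith
      simpa [h1, h2] using h0C
    · have hspos : 0 < c₁ + c₂ := lt_of_le_of_ne (by linarith) (Ne.symm hs)
      have huK : (c₁ / (c₁ + c₂)) • u₁ + (c₂ / (c₁ + c₂)) • u₂ ∈ K :=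
        hKconv hu₁ hu₂ (div_nonneg hc₁ hspos.le) (div_nonneg hc₂ hspos.le)
          (by field_simp)
      refine (hmemC _).2 ⟨_, huK, c₁ + c₂, hspos.le, ?_⟩
      match_scalars <;> (field_simp; try ring)
  have hconvC : Convex ℝ C := by
    intro w₁ h₁ w₂ h₂ a b ha hb _
    exact haddC _ (hsmulC a ha _ h₁) _ (hsmulC b hb _ h₂)
  have hDconv : Convex ℝ (closure C) := hconvC.closure
  have hDne : (closure C).Nonempty := ⟨0, subset_closure h0C⟩
  obtain ⟨P, hPD, hdist, hvar⟩ := aux_proj17 (closure C) hDne isClosed_closure hDconv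
  have hφfun : φ = fun y => (Metric.infDist y (closure C)) ^ 2 := by
    funext y
    simp only [φ, Metric.infDist_closure]
    rfl
  have hgrad : ∀ x, HasGradientAt φ ((2 : ℝ) • (x - P x)) x := by
    intro x
    rw [hφfun]
    exact aux_grad17 (closure C) P hPD hdist hvar x
  have hgradeq : ∀ x, gradient φ x = (2 : ℝ) • (x - P x) := fun x => (hgrad x).gradient
  refine ⟨fun x => (hgrad x).differentiableAt, ?_, ?_⟩
  · -- Lipschitz
    apply LipschitzWith.of_dist_le_mul
    intro x y
    rw [hgradeq x, hgradeq y, dist_eq_norm, ← smul_sub]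
    have key : ‖(x - P x) - (y - P y)‖ ≤ ‖x - y‖ := by
      have h1 : ⟪x - P x, P y - P x⟫ ≤ 0 := hvar x (P y) (hPD y)
      have h2 : ⟪y - P y, P x - P y⟫ ≤ 0 := hvar y (P x) (hPD x)
      have h3 : ⟪(x - P x) - (y - P y), (x - P x) - (y - P y)⟫ =
          ⟪(x - P x) - (y - P y), x - y⟫ + ⟪x - P x, P y - P x⟫ + ⟪y - P y, P x - P y⟫ := by
        simp only [inner_sub_left, inner_sub_right]
        ring
      have h4 : ‖(x - P x) - (y - P y)‖ ^ 2 ≤ ⟪(x - P x) - (y - P y), x - y⟫ := by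
        rw [← real_inner_self_eq_norm_sq]
        linarith
      have h5 : ⟪(x - P x) - (y - P y), x - y⟫ ≤ ‖(x - P x) - (y - P y)‖ * ‖x - y‖ :=
        real_inner_le_norm _ _
      nlinarith [norm_nonneg ((x - P x) - (y - P y)), norm_nonneg (x - y)]
    calc ‖(2 : ℝ) • ((x - P x) - (y - P y))‖ = 2 * ‖(x - P x) - (y - P y)‖ := by
          rw [norm_smul]; simp
      _ ≤ 2 * ‖x - y‖ := by linarith
      _ = (2 : NNReal) * dist x y := by rw [dist_eq_norm]; norm_num
  · -- sup condition
    intro x μ hμ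
    have hμv : μ - v ∈ C := (hmemC _).2 ⟨μ, hμ, 1, zero_le_one, (one_smul ℝ _).symm⟩
    have hPμ : P x + (μ - v) ∈ closure C := by
      have hcont : Continuous (fun y : EuclideanSpace ℝ (Fin d) => y + (μ - v)) :=
        continuous_id.add continuous_const
      have h1 : P x + (μ - v) ∈ (fun y => y + (μ - v)) '' closure C := ⟨P x, hPD x, rfl⟩
      have h2 := image_closure_subset_closure_image hcont h1
      refine closure_mono ?_ h2
      rintro z ⟨w, hw, rfl⟩
      exact haddC w hw _ hμv
    have h1 : ⟪x - P x, (P x + (μ - v)) - P x⟫ ≤ 0 := hvar x _ hPμ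
    have h2 : ⟪x - P x, μ - v⟫ ≤ 0 := by
      have h : (P x + (μ - v)) - P x = μ - v := by abel
      rwa [h] at h1
    rw [hgradeq x]
    have h3 : ⟪μ, (2 : ℝ) • (x - P x)⟫ = 2 * ⟪x - P x, μ⟫ := by
      rw [real_inner_smul_right, real_inner_comm]
    have h4 : ⟪v, (2 : ℝ) • (x - P x)⟫ = 2 * ⟪x - P x, v⟫ := by
      rw [real_inner_smul_right, real_inner_comm]
    have h5 : ⟪x - P x, μ - v⟫ = ⟪x - P x, μ⟫ - ⟪x - P x, v⟫ := inner_sub_right _ _ _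
    rw [h3, h4]
    linarith
end
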